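/- arXiv:2605.16970 — 6 statements merged into one kernel-verified Lean document; each statement's English description precedes it below -/
import Mathlib

section
/- For 0 < α < 2 and a random vector X in ℝ^p with E|X|^α < ∞, the integral over ℝ^p of (1 - E[cos⟨t,X⟩]) / |t|^(α+p) dt equals c(p,α) · E|X|^α, where c(p,α) = 2π^(p/2)Γ(1-α/2) / (α·2^α·Γ((α+p)/2)). -/
open MeasureTheory ProbabilityTheory Real Set Filter Topology
open scoped ENNReal


lemma one_sub_exp_neg_le (u : ℝ) : 1 - Real.exp (-u) ≤ u := by
  have := Real.add_one_le_exp (-u); linarith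

lemma one_sub_exp_neg_nonneg {u : ℝ} (hu : 0 ≤ u) : 0 ≤ 1 - Real.exp (-u) := by
  have : Real.exp (-u) ≤ 1 := Real.exp_le_one_iff.mpr (by linarith)
  linarith


lemma contOnAux (r : ℝ) {s : Set ℝ} (hs : s ⊆ Set.Ioi 0) :
    ContinuousOn (fun u : ℝ => u ^ r * (1 - Real.exp (-u))) s := by
  intro u hu
  have h1 : ContinuousAt (fun u : ℝ => u ^ r) u :=
    Real.continuousAt_rpow_const u r (Or.inl (ne_of_gt (hs hu)))
  have h2 : Continuous fun u : ℝ => 1 - Real.exp (-u) := by continuity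
  exact (h1.mul h2.continuousAt).continuousWithinAt

lemma jIntegrable {α : ℝ} (hα : 0 < α) (hα2 : α < 2) :
    IntegrableOn (fun u : ℝ => u ^ (-α/2 - 1) * (1 - Real.exp (-u))) (Ioi 0) := by
  rw [← Ioc_union_Ioi_eq_Ioi (zero_le_one (α := ℝ))]
  apply IntegrableOn.union
  · have hint : IntegrableOn (fun u : ℝ => u ^ (-α/2)) (Ioc 0 1) := by
      have := (intervalIntegral.intervalIntegrable_rpow' (r := -α/2) (by linarith) (a := 0) (b := 1))
      rwa [intervalIntegrable_iff_integrableOn_Ioc_of_le zero_le_one] at this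
    refine Integrable.mono hint ?_ ?_
    · exact (contOnAux _ (Set.Ioc_subset_Ioi_self)).aestronglyMeasurable measurableSet_Ioc
    · filter_upwards [ae_restrict_mem measurableSet_Ioc] with u hu
      have hu0 : 0 < u := hu.1
      simp only [norm_mul, Real.norm_eq_abs, abs_of_nonneg (rpow_nonneg hu0.le (-α/2-1)),
        abs_of_nonneg (one_sub_exp_neg_nonneg hu0.le), abs_of_nonneg (rpow_nonneg hu0.le (-α/2))]
      calc u ^ (-α/2 - 1) * (1 - Real.exp (-u)) ≤ u ^ (-α/2 - 1) * u := by
            exact mul_le_mul_of_nonneg_left (one_sub_exp_neg_le u) (rpow_nonneg hu0.le _)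
        _ = u ^ (-α/2) := by
            nth_rewrite 2 [← Real.rpow_one u]
            rw [← Real.rpow_add hu0]
            norm_num
  · have hint : IntegrableOn (fun u : ℝ => u ^ (-α/2 - 1)) (Ioi 1) :=
      integrableOn_Ioi_rpow_of_lt (by linarith) one_pos
    refine Integrable.mono hint ?_ ?_
    · exact (contOnAux _ (Set.Ioi_subset_Ioi zero_le_one)).aestronglyMeasurable measurableSet_Ioi
    · filter_upwards [ae_restrict_mem measurableSet_Ioi] with u hu
      have hu0 : (0:ℝ) < u := lt_trans one_pos hu
      simp only [norm_mul, Real.norm_eq_abs, abs_of_nonneg (rpow_nonneg hu0.le (-α/2-1)),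
        abs_of_nonneg (one_sub_exp_neg_nonneg hu0.le)]
      nlinarith [rpow_nonneg hu0.le (-α/2-1), Real.exp_pos (-u),
        one_sub_exp_neg_nonneg hu0.le]

lemma Jval {α : ℝ} (hα : 0 < α) (hα2 : α < 2) :
    ∫ u in Ioi (0:ℝ), u ^ (-α/2 - 1) * (1 - Real.exp (-u)) = 2/α * Real.Gamma (1 - α/2) := by
  set F : ℝ → ℝ := fun u => 2/α * (u ^ (-α/2) * (1 - Real.exp (-u))) with hF
  set f' : ℝ → ℝ := fun u =>
    2/α * (u ^ (-α/2) * Real.exp (-u)) - u ^ (-α/2 - 1) * (1 - Real.exp (-u)) with hf'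
  have h1s : 0 < 1 - α/2 := by linarith
  have g1int : IntegrableOn (fun u : ℝ => 2/α * (u ^ (-α/2) * Real.exp (-u))) (Ioi 0) := by
    have := (Real.GammaIntegral_convergent h1s).const_mul (2/α)
    refine this.congr (Filter.Eventually.of_forall fun x => ?_)
    rw [show (1 - α/2 - 1) = -α/2 by ring]; ring
  have jint := jIntegrable hα hα2
  have f'int : IntegrableOn f' (Ioi 0) := g1int.sub jint
  have hderiv : ∀ x ∈ Ioi (0:ℝ), HasDerivAt F (f' x) x := by
    intro x hx
    have hx0 : x ≠ 0 := ne_of_gt hx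
    have d1 : HasDerivAt (fun u : ℝ => u ^ (-α/2)) (-α/2 * x ^ (-α/2 - 1)) x :=
      Real.hasDerivAt_rpow_const (Or.inl hx0)
    have d2 : HasDerivAt (fun u : ℝ => 1 - Real.exp (-u)) (Real.exp (-x)) x := by
      have : HasDerivAt (fun u : ℝ => Real.exp (-u)) (Real.exp (-x) * (-1)) x :=
        (Real.hasDerivAt_exp (-x)).comp x ((hasDerivAt_id x).neg)
      simpa using this.const_sub 1
    have := ((d1.mul d2).const_mul (2/α))
    refine this.congr_deriv ?_
    rw [hf']
    field_simp
    ring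
  have hcont : ContinuousWithinAt F (Ici (0:ℝ)) 0 := by
    have hF0 : F 0 = 0 := by simp [hF]
    rw [ContinuousWithinAt, hF0]
    apply squeeze_zero' (f := F) (g := fun u => 2/α * u ^ (1 - α/2))
    · filter_upwards [eventually_mem_nhdsWithin] with u (hu : u ∈ Ici (0:ℝ))
      have h0 : (0:ℝ) ≤ u := hu
      exact mul_nonneg (by positivity) (mul_nonneg (rpow_nonneg h0 _) (one_sub_exp_neg_nonneg h0))
    · filter_upwards [eventually_mem_nhdsWithin] with u (hu : u ∈ Ici (0:ℝ))
      rcases eq_or_lt_of_le (Set.mem_Ici.mp hu) with h | h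
      · simp [hF, ← h, Real.zero_rpow (by intro hc; linarith : -α/2 ≠ 0),
          Real.zero_rpow (by intro hc; linarith : 1 - α/2 ≠ 0)]
      · have : u ^ (-α/2) * (1 - Real.exp (-u)) ≤ u ^ (1 - α/2) := by
          calc u ^ (-α/2) * (1 - Real.exp (-u)) ≤ u ^ (-α/2) * u :=
                mul_le_mul_of_nonneg_left (one_sub_exp_neg_le u) (rpow_nonneg h.le _)
            _ = u ^ (1 - α/2) := by
                nth_rewrite 2 [← Real.rpow_one u]
                rw [← Real.rpow_add h]; ring_nf
        calc F u ≤ 2/α * (u ^ (1 - α/2)) := by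
              rw [hF]; exact mul_le_mul_of_nonneg_left this (by positivity)
          _ = 2/α * u ^ (1 - α/2) := by ring
    · have : ContinuousAt (fun u : ℝ => u ^ (1 - α/2)) 0 :=
        Real.continuousAt_rpow_const 0 _ (Or.inr h1s.le)
      have h0 : (0:ℝ) ^ (1 - α/2) = 0 := Real.zero_rpow (ne_of_gt h1s)
      have h2 : Tendsto (fun u : ℝ => u ^ (1 - α/2)) (𝓝[Ici (0:ℝ)] 0) (𝓝 0) := by
        have := this.tendsto
        rw [h0] at this
        exact this.mono_left nhdsWithin_le_nhds
      have h3 := h2.const_mul (2/α)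
      rwa [mul_zero] at h3
  have htop : Tendsto F atTop (𝓝 0) := by
    apply squeeze_zero' (g := fun u => 2/α * u ^ (-(α/2)))
    · filter_upwards [eventually_ge_atTop (0:ℝ)] with u hu
      have h1 : (0:ℝ) ≤ u ^ (-α/2) := rpow_nonneg hu _
      have h2 := one_sub_exp_neg_nonneg hu
      rw [hF]
      have h2 := one_sub_exp_neg_nonneg hu
      exact mul_nonneg (by positivity) (mul_nonneg h1 h2)
    · filter_upwards [eventually_ge_atTop (0:ℝ)] with u hu
      have h2 : 1 - Real.exp (-u) ≤ 1 := by
        have := (Real.exp_pos (-u)).le; linarith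
      have hb : u ^ (-α/2) * (1 - Real.exp (-u)) ≤ u ^ (-α/2) * 1 :=
        mul_le_mul_of_nonneg_left h2 (rpow_nonneg hu _)
      calc F u ≤ 2/α * (u ^ (-α/2) * 1) :=
            mul_le_mul_of_nonneg_left hb (by positivity)
        _ = 2/α * u ^ (-(α/2)) := by rw [mul_one, neg_div]
    · have := (tendsto_rpow_neg_atTop (by linarith : (0:ℝ) < α/2)).const_mul (2/α)
      rwa [mul_zero] at this
  have key := integral_Ioi_of_hasDerivAt_of_tendsto hcont hderiv f'int htop
  have hF0 : F 0 = 0 := by simp [hF]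
  rw [hF0, sub_zero] at key
  have split : ∫ x in Ioi (0:ℝ), f' x =
      (∫ x in Ioi (0:ℝ), 2/α * (x ^ (-α/2) * Real.exp (-x))) -
        ∫ x in Ioi (0:ℝ), x ^ (-α/2 - 1) * (1 - Real.exp (-x)) :=
    integral_sub g1int jint
  have g1val : ∫ x in Ioi (0:ℝ), 2/α * (x ^ (-α/2) * Real.exp (-x))
      = 2/α * Real.Gamma (1 - α/2) := by
    rw [MeasureTheory.integral_const_mul]
    congr 1
    have hI := integral_rpow_mul_exp_neg_mul_Ioi h1s one_pos
    rw [one_div, inv_one, Real.one_rpow, one_mul] at hI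
    rw [← hI]
    refine setIntegral_congr_fun measurableSet_Ioi fun x hx => ?_
    rw [show (1 - α/2 - 1) = -α/2 by ring, one_mul]
  rw [split, g1val] at key
  linarith [key]

lemma kImage {c : ℝ} (hc : 0 < c) : (fun u : ℝ => c / u) '' (Ioi 0) = Ioi 0 := by
  ext y
  constructor
  · rintro ⟨u, hu, rfl⟩; exact div_pos hc hu
  · intro hy; exact ⟨c / y, div_pos hc hy, by field_simp⟩

lemma kderiv {c : ℝ} (hc : 0 < c) :
    ∀ u ∈ Ioi (0:ℝ), HasDerivWithinAt (fun u : ℝ => c / u) (-(c / u^2)) (Ioi 0) u := by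
  intro u hu
  have h : HasDerivAt (fun u : ℝ => c * u⁻¹) (c * (-(u^2)⁻¹)) u :=
    (hasDerivAt_inv (ne_of_gt hu)).const_mul c
  have : HasDerivAt (fun u : ℝ => c / u) (-(c / u^2)) u := by
    simpa [div_eq_mul_inv, mul_neg] using h
  exact this.hasDerivWithinAt

lemma kinj {c : ℝ} (hc : 0 < c) : InjOn (fun u : ℝ => c / u) (Ioi 0) := by
  intro u hu v hv h
  simp only at h
  have := (div_eq_div_iff (ne_of_gt hu) (ne_of_gt hv)).mp h
  exact (mul_left_cancel₀ (ne_of_gt hc) this.symm)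

lemma kPointwise {α c : ℝ} (hα : 0 < α) (hc : 0 < c) {u : ℝ} (hu : 0 < u) :
    |(-(c / u^2))| • ((c/u) ^ (α/2 - 1) * (1 - Real.exp (-(c/(c/u)))))
      = c ^ (α/2) * (u ^ (-α/2 - 1) * (1 - Real.exp (-u))) := by
  have hcu : c / (c/u) = u := by field_simp
  rw [hcu, smul_eq_mul, abs_of_nonpos (neg_nonpos.mpr (by positivity : (0:ℝ) ≤ c/u^2)), neg_neg]
  have h1 : (c/u) ^ (α/2 - 1) = c ^ (α/2-1) * u ^ (1 - α/2) := by
    rw [div_eq_mul_inv, Real.mul_rpow hc.le (inv_nonneg.mpr hu.le),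
      ← Real.rpow_neg_one u, ← Real.rpow_mul hu.le,
      show ((-1) * (α/2 - 1)) = 1 - α/2 by ring]
  rw [h1]
  have e2 : c * c ^ (α/2 - 1) = c ^ (α/2) := by
    have h := Real.rpow_add hc 1 (α/2 - 1)
    rw [Real.rpow_one] at h
    rw [← h]
    congr 1
    ring
  have e3 : u ^ (1 - α/2) / u^2 = u ^ (-α/2 - 1) := by
    rw [show (u:ℝ)^2 = u ^ (2:ℝ) by rw [← Real.rpow_natCast u 2]; norm_num,
      ← Real.rpow_sub hu, show 1 - α/2 - 2 = -α/2 - 1 by ring]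
  calc c / u^2 * (c ^ (α/2-1) * u ^ (1-α/2) * (1 - Real.exp (-u)))
      = (c * c ^ (α/2-1)) * ((u ^ (1-α/2) / u^2) * (1 - Real.exp (-u))) := by ring
    _ = c ^ (α/2) * (u ^ (-α/2 - 1) * (1 - Real.exp (-u))) := by rw [e2, e3]

lemma kIntegrable {α c : ℝ} (hα : 0 < α) (hα2 : α < 2) (hc : 0 < c) :
    IntegrableOn (fun s : ℝ => s ^ (α/2 - 1) * (1 - Real.exp (-(c/s)))) (Ioi 0) := by
  set g : ℝ → ℝ := fun s => s ^ (α/2 - 1) * (1 - Real.exp (-(c/s))) with hg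
  have hiff := integrableOn_image_iff_integrableOn_abs_deriv_smul measurableSet_Ioi
    (kderiv hc) (kinj hc) g
  rw [kImage hc] at hiff
  rw [hiff]
  have : IntegrableOn (fun u : ℝ => c ^ (α/2) * (u ^ (-α/2 - 1) * (1 - Real.exp (-u))))
      (Ioi 0) := (jIntegrable hα hα2).const_mul _
  refine this.congr_fun (fun u hu => ?_) measurableSet_Ioi
  exact (kPointwise hα hc hu).symm

lemma kval {α c : ℝ} (hα : 0 < α) (hα2 : α < 2) (hc : 0 < c) :
    ∫ s in Ioi (0:ℝ), s ^ (α/2 - 1) * (1 - Real.exp (-(c/s)))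
      = c ^ (α/2) * (2/α * Real.Gamma (1 - α/2)) := by
  set g : ℝ → ℝ := fun s => s ^ (α/2 - 1) * (1 - Real.exp (-(c/s))) with hg
  have h := integral_image_eq_integral_abs_deriv_smul measurableSet_Ioi
    (kderiv hc) (kinj hc) g
  rw [kImage hc] at h
  rw [h]
  rw [setIntegral_congr_fun measurableSet_Ioi
    (fun u hu => kPointwise hα hc hu (α := α))]
  rw [MeasureTheory.integral_const_mul, Jval hα hα2]

lemma gaussInt {p : ℕ} {s : ℝ} (hs : 0 < s) :
    Integrable (fun t : EuclideanSpace ℝ (Fin p) => Real.exp (-s * ‖t‖^2)) := by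
  have h := GaussianFourier.integrable_cexp_neg_mul_sq_norm_add
    (V := EuclideanSpace ℝ (Fin p)) (b := (s:ℂ)) (by simpa using hs) 0 0
  have h2 := h.re
  refine h2.congr (Filter.Eventually.of_forall fun t => ?_)
  simp [Complex.exp_re]
  norm_cast
  simp

lemma gaussCosInt {p : ℕ} (x : EuclideanSpace ℝ (Fin p)) {s : ℝ} (hs : 0 < s) :
    Integrable (fun t : EuclideanSpace ℝ (Fin p) =>
      Real.cos ((inner ℝ t x : ℝ)) * Real.exp (-s * ‖t‖^2)) := by
  refine (gaussInt hs).mono ?_ (Filter.Eventually.of_forall fun t => ?_)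
  · apply Measurable.aestronglyMeasurable
    have h1 : Measurable fun t : EuclideanSpace ℝ (Fin p) => (inner ℝ t x : ℝ) :=
      (continuous_id.inner continuous_const).measurable
    exact (h1.cos).mul ((measurable_norm.pow_const 2).const_mul (-s)).exp
  · rw [norm_mul, Real.norm_eq_abs, Real.norm_eq_abs]
    exact mul_le_of_le_one_left (abs_nonneg _) (Real.abs_cos_le_one _)

lemma gaussCos {p : ℕ} (x : EuclideanSpace ℝ (Fin p)) {s : ℝ} (hs : 0 < s) :
    ∫ t : EuclideanSpace ℝ (Fin p), Real.cos ((inner ℝ t x : ℝ)) * Real.exp (-s * ‖t‖^2)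
      = (π / s) ^ ((p:ℝ)/2) * Real.exp (-(‖x‖^2/(4*s))) := by
  have hb : (0:ℝ) < ((s:ℂ)).re := by simpa using hs
  have hint := GaussianFourier.integrable_cexp_neg_mul_sq_norm_add
    (V := EuclideanSpace ℝ (Fin p)) (b := (s:ℂ)) hb Complex.I x
  have hval := GaussianFourier.integral_cexp_neg_mul_sq_norm_add
    (V := EuclideanSpace ℝ (Fin p)) (b := (s:ℂ)) hb Complex.I x
  have hre := (integral_re hint).trans (congrArg RCLike.re hval)
  simp only [RCLike.re_to_complex] at hre
  have hl : ∫ t : EuclideanSpace ℝ (Fin p),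
      (Complex.exp (-(s:ℂ) * (‖t‖:ℂ)^2 + Complex.I * ((inner ℝ x t : ℝ):ℂ))).re
      = ∫ t : EuclideanSpace ℝ (Fin p), Real.cos ((inner ℝ t x : ℝ)) * Real.exp (-s * ‖t‖^2) := by
    refine integral_congr_ae (Filter.Eventually.of_forall fun t => ?_)
    show (Complex.exp (-(s:ℂ) * (‖t‖:ℂ)^2 + Complex.I * ((inner ℝ x t : ℝ):ℂ))).re
      = Real.cos ((inner ℝ t x : ℝ)) * Real.exp (-s * ‖t‖^2)
    have hz : -(s:ℂ) * (‖t‖:ℂ)^2 + Complex.I * ((inner ℝ x t : ℝ):ℂ)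
        = ((-s*‖t‖^2 : ℝ) : ℂ) + ((inner ℝ x t : ℝ) : ℂ) * Complex.I := by push_cast; ring
    rw [hz, Complex.exp_re]
    simp only [Complex.add_re, Complex.ofReal_re, Complex.mul_I_re, Complex.ofReal_im,
      Complex.add_im, Complex.mul_I_im]
    simp only [neg_zero, add_zero, zero_add, sub_zero]
    rw [real_inner_comm x t]
    ring
  rw [hl] at hre
  rw [hre]
  have h2 : Complex.I ^ 2 * ((‖x‖:ℂ))^2 / (4 * (s:ℂ)) = ((-(‖x‖^2/(4*s)) : ℝ) : ℂ) := by
    rw [Complex.I_sq]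
    push_cast
    field_simp
  rw [h2]
  have h3 : (Module.finrank ℝ (EuclideanSpace ℝ (Fin p)) : ℂ) / 2 = (((p:ℝ)/2 : ℝ) : ℂ) := by
    rw [finrank_euclideanSpace_fin]
    push_cast
    ring
  rw [h3]
  have h4 : ((π:ℂ) / (s:ℂ)) = (((π/s : ℝ)) : ℂ) := by push_cast; ring
  rw [h4, ← Complex.ofReal_cpow (by positivity) ((p:ℝ)/2), ← Complex.ofReal_exp,
    ← Complex.ofReal_mul]
  exact Complex.ofReal_re _

lemma gaussOneSubCosInt {p : ℕ} (x : EuclideanSpace ℝ (Fin p)) {s : ℝ} (hs : 0 < s) :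
    Integrable (fun t : EuclideanSpace ℝ (Fin p) =>
      (1 - Real.cos ((inner ℝ t x : ℝ))) * Real.exp (-s * ‖t‖^2)) := by
  have h := (gaussInt (p := p) hs).sub (gaussCosInt x hs)
  refine h.congr (Filter.Eventually.of_forall fun t => ?_)
  simp only [Pi.sub_apply]
  ring

lemma gaussOneSubCos {p : ℕ} (x : EuclideanSpace ℝ (Fin p)) {s : ℝ} (hs : 0 < s) :
    ∫ t : EuclideanSpace ℝ (Fin p), (1 - Real.cos ((inner ℝ t x : ℝ))) * Real.exp (-s * ‖t‖^2)
      = (π / s) ^ ((p:ℝ)/2) * (1 - Real.exp (-(‖x‖^2/(4*s)))) := by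
  have hsplit : ∫ t : EuclideanSpace ℝ (Fin p),
      (1 - Real.cos ((inner ℝ t x : ℝ))) * Real.exp (-s * ‖t‖^2)
      = (∫ t : EuclideanSpace ℝ (Fin p), Real.exp (-s * ‖t‖^2)) -
        ∫ t : EuclideanSpace ℝ (Fin p), Real.cos ((inner ℝ t x : ℝ)) * Real.exp (-s * ‖t‖^2) := by
    rw [← integral_sub (gaussInt hs) (gaussCosInt x hs)]
    congr 1; funext t; ring
  rw [hsplit, gaussCos x hs]
  have hgauss : ∫ t : EuclideanSpace ℝ (Fin p), Real.exp (-s * ‖t‖^2)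
      = (π / s) ^ ((p:ℝ)/2) := by
    have := GaussianFourier.integral_rexp_neg_mul_sq_norm (V := EuclideanSpace ℝ (Fin p)) hs
    rwa [finrank_euclideanSpace_fin] at this
  rw [hgauss]
  ring

/-- The constant c(p,α) from Székely–Rizzo–Bakirov. -/
noncomputable def cConst (p : ℕ) (α : ℝ) : ℝ :=
  2 * Real.pi ^ ((p : ℝ) / 2) * Real.Gamma (1 - α / 2) /
    (α * 2 ^ α * Real.Gamma ((α + p) / 2))

lemma lemA {p : ℕ} {α : ℝ} (hα : 0 < α) (hα2 : α < 2) (x : EuclideanSpace ℝ (Fin p)) :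
    ∫⁻ t : EuclideanSpace ℝ (Fin p),
        ENNReal.ofReal ((1 - Real.cos ((inner ℝ t x : ℝ))) / ‖t‖ ^ (α + (p : ℝ)))
      = ENNReal.ofReal (cConst p α * ‖x‖ ^ α) := by
  have hcos : ∀ y : ℝ, 0 ≤ 1 - Real.cos y := fun y => by linarith [Real.cos_le_one y]
  rcases Nat.eq_zero_or_pos p with hp | hp
  · subst hp
    have hv : ∀ v : EuclideanSpace ℝ (Fin 0), v = 0 := fun v => by ext i; exact i.elim0
    have h0 : ∀ t : EuclideanSpace ℝ (Fin 0),
        ENNReal.ofReal ((1 - Real.cos ((inner ℝ t x : ℝ))) / ‖t‖ ^ (α + (0:ℕ):ℝ)) = 0 := by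
      intro t
      rw [hv t, inner_zero_left, Real.cos_zero, sub_self, zero_div, ENNReal.ofReal_zero]
    rw [lintegral_congr h0, lintegral_zero, hv x, norm_zero,
      Real.zero_rpow (ne_of_gt hα), mul_zero, ENNReal.ofReal_zero]
  rcases eq_or_ne x 0 with hx | hx
  · subst hx
    have h0 : ∀ t : EuclideanSpace ℝ (Fin p),
        ENNReal.ofReal ((1 - Real.cos ((inner ℝ t (0 : EuclideanSpace ℝ (Fin p)) : ℝ)))
          / ‖t‖ ^ (α + (p:ℝ))) = 0 := by
      intro t
      rw [inner_zero_right, Real.cos_zero, sub_self, zero_div, ENNReal.ofReal_zero]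
    rw [lintegral_congr h0, lintegral_zero, norm_zero,
      Real.zero_rpow (ne_of_gt hα), mul_zero, ENNReal.ofReal_zero]
  -- main case
  haveI : Nontrivial (EuclideanSpace ℝ (Fin p)) := by
    refine nontrivial_of_ne (EuclideanSpace.single ⟨0, hp⟩ 1) 0 ?_
    intro h
    have := congrArg norm h
    rw [EuclideanSpace.norm_single, norm_zero] at this
    norm_num at this
  set β : ℝ := (α + p)/2 with hβdef
  have hβ : 0 < β := by positivity
  have hΓβ : 0 < Real.Gamma β := Real.Gamma_pos_of_pos hβ
  have hxn : 0 < ‖x‖ := norm_pos_iff.mpr hx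
  set c : ℝ := ‖x‖^2/4 with hcdef
  have hc0 : 0 < c := by positivity
  have h1s : 0 < 1 - α/2 := by linarith
  set g : EuclideanSpace ℝ (Fin p) → ℝ → ℝ := fun t s =>
    (1 - Real.cos ((inner ℝ t x : ℝ))) * (s ^ (β - 1) * Real.exp (-(‖t‖^2 * s))) with hgdef
  -- Step A: pointwise identity for t ≠ 0
  have stepA : ∀ t : EuclideanSpace ℝ (Fin p), t ≠ 0 →
      ENNReal.ofReal ((1 - Real.cos ((inner ℝ t x : ℝ))) / ‖t‖ ^ (α + (p:ℝ)))
        = ENNReal.ofReal (1 / Real.Gamma β) * ∫⁻ s in Ioi (0:ℝ), ENNReal.ofReal (g t s) := by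
    intro t ht
    have htn : 0 < ‖t‖ := norm_pos_iff.mpr ht
    have htn2 : 0 < ‖t‖^2 := by positivity
    have hint : IntegrableOn (fun s => g t s) (Ioi 0) := by
      apply Integrable.const_mul
      have h := integrableOn_rpow_mul_exp_neg_mul_rpow
        (s := β - 1) (p := 1) (by linarith) one_pos htn2
      refine h.congr_fun (fun s hs => ?_) measurableSet_Ioi
      simp only [Real.rpow_one]
      ring_nf
    have hval : ∫ s in Ioi (0:ℝ), g t s
        = (1 - Real.cos ((inner ℝ t x : ℝ))) * ((1/‖t‖^2) ^ β * Real.Gamma β) := by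
      rw [hgdef]
      simp only
      rw [MeasureTheory.integral_const_mul, integral_rpow_mul_exp_neg_mul_Ioi hβ htn2]
    have hnorm : ((1:ℝ)/‖t‖^2) ^ β = (‖t‖ ^ (α + (p:ℝ)))⁻¹ := by
      have e1 : ((1:ℝ)/‖t‖^2) = ‖t‖ ^ (-2 : ℝ) := by
        rw [Real.rpow_neg htn.le, one_div]
        congr 1
        rw [show (2:ℝ) = ((2:ℕ):ℝ) by norm_num, Real.rpow_natCast]
      rw [e1, ← Real.rpow_mul htn.le, show (-2) * β = -(α + (p:ℝ)) by rw [hβdef]; ring,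
        Real.rpow_neg htn.le]
    have hfrac : (1 - Real.cos ((inner ℝ t x : ℝ))) / ‖t‖ ^ (α + (p:ℝ))
        = (1 / Real.Gamma β) *
          ((1 - Real.cos ((inner ℝ t x : ℝ))) * ((1/‖t‖^2) ^ β * Real.Gamma β)) := by
      rw [hnorm]
      field_simp
    rw [hfrac, ENNReal.ofReal_mul (by positivity), ← hval,
      ofReal_integral_eq_lintegral_ofReal hint ?_]
    · filter_upwards [ae_restrict_mem measurableSet_Ioi] with s hs
      have hs0 : (0:ℝ) < s := hs
      exact mul_nonneg (hcos _) (mul_nonneg (Real.rpow_nonneg hs0.le _) (Real.exp_pos _).le)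
  -- a.e. every t is nonzero
  have hae : ∀ᵐ t : EuclideanSpace ℝ (Fin p), t ≠ 0 := by
    rw [ae_iff]
    have hset : {t : EuclideanSpace ℝ (Fin p) | ¬ t ≠ 0} = {0} := by ext t; simp
    rw [hset]
    exact measure_singleton 0
  rw [lintegral_congr_ae (hae.mono fun t ht => stepA t ht),
    lintegral_const_mul' _ _ ENNReal.ofReal_ne_top]
  have hmeas : AEMeasurable (fun q : (EuclideanSpace ℝ (Fin p)) × ℝ => ENNReal.ofReal (g q.1 q.2))
      (volume.prod (volume.restrict (Ioi 0))) := by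
    apply Measurable.aemeasurable
    apply Measurable.ennreal_ofReal
    have h1 : Measurable fun q : (EuclideanSpace ℝ (Fin p)) × ℝ =>
        (1 - Real.cos ((inner ℝ q.1 x : ℝ))) := by
      have hc1 : Continuous fun q : (EuclideanSpace ℝ (Fin p)) × ℝ => (inner ℝ q.1 x : ℝ) :=
        (continuous_fst).inner continuous_const
      exact measurable_const.sub hc1.measurable.cos
    have h2 : Measurable fun q : (EuclideanSpace ℝ (Fin p)) × ℝ => q.2 ^ (β - 1) := by
      have hm : Measurable fun s : ℝ => s ^ (β - 1) := by measurability
      exact hm.comp measurable_snd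
    have h3 : Measurable fun q : (EuclideanSpace ℝ (Fin p)) × ℝ =>
        Real.exp (-(‖q.1‖^2 * q.2)) :=
      (((measurable_fst.norm.pow measurable_const).mul measurable_snd).neg).exp
    exact h1.mul (h2.mul h3)
  rw [lintegral_lintegral_swap hmeas]
  -- inner integral over t for fixed s
  have stepD : ∀ᵐ s ∂(volume.restrict (Ioi (0:ℝ))),
      (∫⁻ t : EuclideanSpace ℝ (Fin p), ENNReal.ofReal (g t s))
        = ENNReal.ofReal (π ^ ((p:ℝ)/2) * (s ^ (α/2 - 1) * (1 - Real.exp (-(c/s))))) := by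
    filter_upwards [ae_restrict_mem measurableSet_Ioi] with s hs
    have hs' : (0:ℝ) < s := hs
    have hint_t : Integrable (fun t => g t s) (volume (α := EuclideanSpace ℝ (Fin p))) := by
      have h := (gaussOneSubCosInt x hs').const_mul (s ^ (β - 1))
      refine h.congr (Filter.Eventually.of_forall fun t => ?_)
      rw [hgdef]
      simp only
      rw [show -(‖t‖^2 * s) = -s * ‖t‖^2 by ring]
      ring
    rw [← ofReal_integral_eq_lintegral_ofReal hint_t ?_]
    swap
    · refine Filter.Eventually.of_forall fun t => ?_
      exact mul_nonneg (hcos _) (mul_nonneg (Real.rpow_nonneg hs'.le _) (Real.exp_pos _).le)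
    congr 1
    have hre : (fun t : EuclideanSpace ℝ (Fin p) => g t s)
        = fun t => s ^ (β - 1) * ((1 - Real.cos ((inner ℝ t x : ℝ))) * Real.exp (-s * ‖t‖^2)) := by
      funext t
      rw [hgdef]
      simp only
      rw [show -(‖t‖^2 * s) = -s * ‖t‖^2 by ring]
      ring
    rw [hre, MeasureTheory.integral_const_mul, gaussOneSubCos x hs']
    have e1 : (π/s) ^ ((p:ℝ)/2) = π ^ ((p:ℝ)/2) * s ^ (-((p:ℝ)/2)) := by
      rw [Real.div_rpow Real.pi_pos.le hs'.le, Real.rpow_neg hs'.le, div_eq_mul_inv]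
    have e2 : s ^ (β - 1) * s ^ (-((p:ℝ)/2)) = s ^ (α/2 - 1) := by
      rw [← Real.rpow_add hs']
      congr 1
      rw [hβdef]
      ring
    have e3 : ‖x‖^2/(4*s) = c/s := by
      rw [hcdef]
      field_simp
    rw [e3, e1]
    calc s ^ (β-1) * (π ^ ((p:ℝ)/2) * s ^ (-((p:ℝ)/2)) * (1 - Real.exp (-(c/s))))
        = π ^ ((p:ℝ)/2) * ((s ^ (β-1) * s ^ (-((p:ℝ)/2))) * (1 - Real.exp (-(c/s)))) := by ring
      _ = π ^ ((p:ℝ)/2) * (s ^ (α/2 - 1) * (1 - Real.exp (-(c/s)))) := by rw [e2]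
  rw [lintegral_congr_ae stepD]
  -- evaluate the s integral
  have hkint : IntegrableOn
      (fun s : ℝ => π ^ ((p:ℝ)/2) * (s ^ (α/2 - 1) * (1 - Real.exp (-(c/s))))) (Ioi 0) :=
    (kIntegrable hα hα2 hc0).const_mul _
  rw [← ofReal_integral_eq_lintegral_ofReal hkint ?_]
  swap
  · filter_upwards [ae_restrict_mem measurableSet_Ioi] with s hs
    have hs' : (0:ℝ) < s := hs
    exact mul_nonneg (Real.rpow_nonneg Real.pi_pos.le _)
      (mul_nonneg (Real.rpow_nonneg hs'.le _)
        (one_sub_exp_neg_nonneg (div_nonneg hc0.le hs'.le)))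
  rw [MeasureTheory.integral_const_mul, kval hα hα2 hc0,
    ← ENNReal.ofReal_mul (by positivity : (0:ℝ) ≤ 1/Real.Gamma β)]
  congr 1
  have hc2 : c ^ (α/2) = ‖x‖ ^ α / 2 ^ α := by
    rw [hcdef, Real.div_rpow (by positivity) (by norm_num : (0:ℝ) ≤ 4)]
    congr 1
    · rw [← Real.rpow_natCast ‖x‖ 2, ← Real.rpow_mul (norm_nonneg x),
        show ((2:ℕ):ℝ) * (α/2) = α by push_cast; ring]
    · rw [show (4:ℝ) = (2:ℝ)^(2:ℕ) by norm_num, ← Real.rpow_natCast (2:ℝ) 2,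
        ← Real.rpow_mul (by norm_num : (0:ℝ) ≤ 2),
        show ((2:ℕ):ℝ) * (α/2) = α by push_cast; ring]
  rw [hc2, cConst, ← hβdef]
  have h2α : (0:ℝ) < 2 ^ α := Real.rpow_pos_of_pos two_pos α
  field_simp

theorem stmt0 {Ω : Type*} [MeasureSpace Ω] [IsProbabilityMeasure (ℙ : Measure Ω)]
    {p : ℕ} (X : Ω → EuclideanSpace ℝ (Fin p)) (hX : Measurable X)
    {α : ℝ} (hα : 0 < α) (hα2 : α < 2)
    (hmom : Integrable (fun ω => ‖X ω‖ ^ α) (ℙ : Measure Ω)) :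
    ∫ t : EuclideanSpace ℝ (Fin p),
        (1 - ∫ ω, Real.cos ((inner ℝ t (X ω) : ℝ))) / ‖t‖ ^ (α + (p : ℝ)) =
      cConst p α * ∫ ω, ‖X ω‖ ^ α := by
  have hcos : ∀ y : ℝ, 0 ≤ 1 - Real.cos y := fun y => by linarith [Real.cos_le_one y]
  have hinner : Measurable fun q : (EuclideanSpace ℝ (Fin p)) × Ω =>
      (inner ℝ q.1 (X q.2) : ℝ) := by
    have hcont : Continuous fun v : (EuclideanSpace ℝ (Fin p)) × (EuclideanSpace ℝ (Fin p)) =>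
        (inner ℝ v.1 v.2 : ℝ) := continuous_inner
    exact hcont.measurable.comp (measurable_fst.prodMk (hX.comp measurable_snd))
  have hcosmeas : Measurable fun q : (EuclideanSpace ℝ (Fin p)) × Ω =>
      Real.cos ((inner ℝ q.1 (X q.2) : ℝ)) := hinner.cos
  have hcosint : ∀ t : EuclideanSpace ℝ (Fin p),
      Integrable (fun ω => Real.cos ((inner ℝ t (X ω) : ℝ))) ℙ := by
    intro t
    refine Integrable.mono' (integrable_const 1) ?_ ?_
    · exact (hcosmeas.comp measurable_prodMk_left).aestronglyMeasurable
    · exact Filter.Eventually.of_forall fun ω => by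
        rw [Real.norm_eq_abs]; exact Real.abs_cos_le_one _
  have key : ∀ t : EuclideanSpace ℝ (Fin p),
      (1 - ∫ ω, Real.cos ((inner ℝ t (X ω) : ℝ))) / ‖t‖ ^ (α + (p:ℝ))
        = ∫ ω, (1 - Real.cos ((inner ℝ t (X ω) : ℝ))) / ‖t‖ ^ (α + (p:ℝ)) := by
    intro t
    have h1 : (1:ℝ) - ∫ ω, Real.cos ((inner ℝ t (X ω) : ℝ))
        = ∫ ω, (1 - Real.cos ((inner ℝ t (X ω) : ℝ))) := by
      rw [integral_sub (integrable_const 1) (hcosint t), integral_const]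
      simp
    rw [h1, ← integral_div]
  have hGnonneg : ∀ t : EuclideanSpace ℝ (Fin p),
      0 ≤ (1 - ∫ ω, Real.cos ((inner ℝ t (X ω) : ℝ))) / ‖t‖ ^ (α + (p:ℝ)) := by
    intro t
    rw [key t]
    exact integral_nonneg fun ω => div_nonneg (hcos _) (Real.rpow_nonneg (norm_nonneg _) _)
  have hrm : Measurable fun r : ℝ => r ^ (α + (p:ℝ)) := by measurability
  have hGmeas : AEStronglyMeasurable (fun t : EuclideanSpace ℝ (Fin p) =>
      (1 - ∫ ω, Real.cos ((inner ℝ t (X ω) : ℝ))) / ‖t‖ ^ (α + (p:ℝ))) volume := by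
    have h1 : StronglyMeasurable fun q : (EuclideanSpace ℝ (Fin p)) × Ω =>
        Real.cos ((inner ℝ q.1 (X q.2) : ℝ)) := hcosmeas.stronglyMeasurable
    have h2 := h1.integral_prod_right' (ν := ℙ)
    exact ((measurable_const.sub h2.measurable).div
      (hrm.comp measurable_norm)).aestronglyMeasurable
  rw [integral_eq_lintegral_of_nonneg_ae (Filter.Eventually.of_forall hGnonneg) hGmeas]
  have hsec : ∀ t : EuclideanSpace ℝ (Fin p),
      Integrable (fun ω => (1 - Real.cos ((inner ℝ t (X ω) : ℝ))) / ‖t‖ ^ (α + (p:ℝ))) ℙ :=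
    fun t => ((integrable_const (1:ℝ)).sub (hcosint t)).div_const _
  have hofReal : ∀ t : EuclideanSpace ℝ (Fin p),
      ENNReal.ofReal ((1 - ∫ ω, Real.cos ((inner ℝ t (X ω) : ℝ))) / ‖t‖ ^ (α + (p:ℝ)))
        = ∫⁻ ω, ENNReal.ofReal ((1 - Real.cos ((inner ℝ t (X ω) : ℝ))) / ‖t‖ ^ (α + (p:ℝ))) := by
    intro t
    rw [key t]
    exact ofReal_integral_eq_lintegral_ofReal (hsec t)
      (Filter.Eventually.of_forall fun ω =>
        div_nonneg (hcos _) (Real.rpow_nonneg (norm_nonneg _) _))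
  rw [lintegral_congr hofReal]
  have hswapmeas : AEMeasurable (fun q : (EuclideanSpace ℝ (Fin p)) × Ω =>
      ENNReal.ofReal ((1 - Real.cos ((inner ℝ q.1 (X q.2) : ℝ))) / ‖q.1‖ ^ (α + (p:ℝ))))
      (volume.prod ℙ) := by
    apply Measurable.aemeasurable
    exact ((measurable_const.sub hcosmeas).div
      (hrm.comp measurable_fst.norm)).ennreal_ofReal
  rw [lintegral_lintegral_swap hswapmeas]
  have hinnerval : ∀ ω : Ω, (∫⁻ t : EuclideanSpace ℝ (Fin p),
      ENNReal.ofReal ((1 - Real.cos ((inner ℝ t (X ω) : ℝ))) / ‖t‖ ^ (α + (p:ℝ))))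
      = ENNReal.ofReal (cConst p α * ‖X ω‖ ^ α) := fun ω => lemA hα hα2 (X ω)
  rw [lintegral_congr hinnerval]
  have hcC : 0 ≤ cConst p α := by
    rw [cConst]
    have g1 : 0 ≤ Real.Gamma (1 - α/2) := Real.Gamma_nonneg_of_nonneg (by linarith)
    have g2 : 0 ≤ Real.Gamma ((α + p)/2) := Real.Gamma_nonneg_of_nonneg (by positivity)
    have g3 : (0:ℝ) ≤ π ^ ((p:ℝ)/2) := Real.rpow_nonneg Real.pi_pos.le _
    have h2α : (0:ℝ) ≤ 2 ^ α := (Real.rpow_pos_of_pos two_pos α).le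
    positivity
  rw [← ofReal_integral_eq_lintegral_ofReal (hmom.const_mul (cConst p α))
    (Filter.Eventually.of_forall fun ω => mul_nonneg hcC (Real.rpow_nonneg (norm_nonneg _) _))]
  rw [MeasureTheory.integral_const_mul, ENNReal.toReal_ofReal
    (mul_nonneg hcC (integral_nonneg fun ω => Real.rpow_nonneg (norm_nonneg _) _))]
end

section
/- siCov^(α)(X,Y) = 0 if and only if X and Y are sub-independent, i.e., φ_{X,Y}(t,t) = φ_X(t)φ_Y(t) for all t ∈ ℝ^p (equivalently, the distribution of X+Y is the convolution of the distributions of X and Y). -/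
open MeasureTheory ProbabilityTheory Real

/-- The weight function ρ_α(t) = c(p,α)⁻¹ |t|^{-α-p}. -/
noncomputable def rhoWeight (p : ℕ) (α : ℝ) (t : EuclideanSpace ℝ (Fin p)) : ℝ :=
  (cConst p α)⁻¹ * ‖t‖ ^ (-α - (p : ℝ))

section Aux

open Metric Set

set_option linter.unusedSectionVars false

lemma exp_I_abs (r : ℝ) : ‖Complex.exp (Complex.I * r)‖ = 1 := by
  rw [Complex.norm_exp]; simp

lemma exp_I_norm (r : ℝ) : ‖Complex.exp (Complex.I * r)‖ = 1 := exp_I_abs r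

lemma exp_I_sub_one {β : ℝ} (hβ0 : 0 ≤ β) (hβ1 : β ≤ 1) (r : ℝ) :
    ‖Complex.exp (Complex.I * r) - 1‖ ≤ 2 * |r| ^ β := by
  rcases eq_or_ne r 0 with h | h
  · simp [h]
    positivity
  have habs : ‖Complex.I * r‖ = |r| := by
    simp
  rcases le_or_gt (|r|) 1 with h1 | h1
  · calc ‖Complex.exp (Complex.I * r) - 1‖ ≤ 2 * ‖Complex.I * r‖ :=
        Complex.norm_exp_sub_one_le (by rw [habs]; exact h1)
      _ = 2 * |r| := by rw [habs]
      _ ≤ 2 * |r| ^ β := by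
          have h2 := Real.rpow_le_rpow_of_exponent_ge (abs_pos.mpr h) h1 hβ1
          rw [Real.rpow_one] at h2
          linarith
  · calc ‖Complex.exp (Complex.I * r) - 1‖
        ≤ ‖Complex.exp (Complex.I * r)‖ + ‖(1:ℂ)‖ :=
          norm_sub_le _ _
      _ = 2 := by rw [exp_I_abs, norm_one]; norm_num
      _ ≤ 2 * |r| ^ β := by
          have : (1:ℝ) ≤ |r| ^ β := Real.one_le_rpow h1.le hβ0
          nlinarith

lemma ballInt {p : ℕ} {s : ℝ} (hs : -(p:ℝ) < s) (hs0 : s < 0) :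
    IntegrableOn (fun t : EuclideanSpace ℝ (Fin p) => ‖t‖ ^ s) (ball 0 1) volume := by
  have hmeas : Measurable fun t : EuclideanSpace ℝ (Fin p) => ‖t‖ ^ s :=
    measurable_norm.pow_const s
  constructor
  · exact hmeas.aestronglyMeasurable
  · rw [hasFiniteIntegral_iff_ofReal (Filter.Eventually.of_forall fun t =>
      Real.rpow_nonneg (norm_nonneg t) s)]
    rw [lintegral_eq_lintegral_meas_le _ (Filter.Eventually.of_forall fun t =>
      Real.rpow_nonneg (norm_nonneg t) s) hmeas.aemeasurable]
    set ν := volume.restrict (ball (0 : EuclideanSpace ℝ (Fin p)) 1)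
    have hsplit : Ioi (0:ℝ) = Ioc 0 1 ∪ Ioi 1 := (Set.Ioc_union_Ioi_eq_Ioi zero_le_one).symm
    rw [hsplit, lintegral_union measurableSet_Ioi (Set.Ioc_disjoint_Ioi le_rfl)]
    have hball : volume (ball (0 : EuclideanSpace ℝ (Fin p)) 1) < ⊤ := measure_ball_lt_top
    have hkey : ∀ u : ℝ, 0 < u →
        ν {a | u ≤ ‖a‖ ^ s} ≤ ENNReal.ofReal (u ^ ((p:ℝ) * s⁻¹)) *
          volume (ball (0 : EuclideanSpace ℝ (Fin p)) 1) := by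
      intro u hu
      have hsub : {a : EuclideanSpace ℝ (Fin p) | u ≤ ‖a‖ ^ s} ⊆ closedBall 0 (u ^ s⁻¹) := by
        intro a ha
        simp only [Set.mem_setOf_eq] at ha
        rcases eq_or_ne a 0 with rfl | h0
        · simp only [norm_zero] at ha
          rw [Real.zero_rpow hs0.ne] at ha
          linarith
        · have hn : 0 < ‖a‖ := norm_pos_iff.mpr h0
          rw [mem_closedBall, dist_zero_right]
          exact (Real.le_rpow_inv_iff_of_neg hn hu hs0).mpr ha
      calc ν {a | u ≤ ‖a‖ ^ s} ≤ volume (closedBall (0 : EuclideanSpace ℝ (Fin p)) (u ^ s⁻¹)) :=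
            le_trans (Measure.restrict_le_self _) (measure_mono hsub)
        _ = ENNReal.ofReal ((u ^ s⁻¹) ^ p) * volume (ball (0 : EuclideanSpace ℝ (Fin p)) 1) := by
            rw [Measure.addHaar_closedBall _ _ (Real.rpow_nonneg hu.le _)]
            rw [finrank_euclideanSpace_fin]
        _ = ENNReal.ofReal (u ^ ((p:ℝ) * s⁻¹)) * volume (ball (0 : EuclideanSpace ℝ (Fin p)) 1) := by
            rw [← Real.rpow_natCast (u ^ s⁻¹) p, ← Real.rpow_mul hu.le, mul_comm s⁻¹]
    have h1 : ∫⁻ u in Ioc (0:ℝ) 1, ν {a | u ≤ ‖a‖ ^ s} < ⊤ := by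
      calc ∫⁻ u in Ioc (0:ℝ) 1, ν {a | u ≤ ‖a‖ ^ s}
          ≤ ∫⁻ _ in Ioc (0:ℝ) 1, volume (ball (0 : EuclideanSpace ℝ (Fin p)) 1) := by
            apply lintegral_mono
            intro u
            exact (measure_mono (Set.subset_univ _)).trans_eq (Measure.restrict_apply_univ _)
        _ < ⊤ := by
            rw [lintegral_const]
            exact ENNReal.mul_lt_top hball (by simp [Real.volume_Ioc])
    have h2 : ∫⁻ u in Ioi (1:ℝ), ν {a | u ≤ ‖a‖ ^ s} < ⊤ := by
      have hexp : (p:ℝ) * s⁻¹ < -1 := by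
        rw [← div_eq_mul_inv, div_lt_iff_of_neg hs0]
        linarith
      have hfin : ∫⁻ u in Ioi (1:ℝ), ENNReal.ofReal (u ^ ((p:ℝ) * s⁻¹)) < ⊤ := by
        have hint : IntegrableOn (fun u : ℝ => u ^ ((p:ℝ) * s⁻¹)) (Ioi 1) volume :=
          integrableOn_Ioi_rpow_of_lt hexp one_pos
        refine lt_of_le_of_lt (lintegral_mono fun u => ?_) hint.2
        exact Real.ofReal_le_enorm _
      calc ∫⁻ u in Ioi (1:ℝ), ν {a | u ≤ ‖a‖ ^ s}
          ≤ ∫⁻ u in Ioi (1:ℝ), ENNReal.ofReal (u ^ ((p:ℝ) * s⁻¹)) *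
            volume (ball (0 : EuclideanSpace ℝ (Fin p)) 1) := by
            refine setLIntegral_mono' measurableSet_Ioi fun u hu => hkey u ?_
            exact lt_trans one_pos hu
        _ = (∫⁻ u in Ioi (1:ℝ), ENNReal.ofReal (u ^ ((p:ℝ) * s⁻¹))) *
            volume (ball (0 : EuclideanSpace ℝ (Fin p)) 1) :=
            lintegral_mul_const' _ _ hball.ne
        _ < ⊤ := ENNReal.mul_lt_top hfin hball
    exact ENNReal.add_lt_top.mpr ⟨h1, h2⟩

lemma complInt {p : ℕ} {r : ℝ} (hr : (p:ℝ) < r) :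
    IntegrableOn (fun t : EuclideanSpace ℝ (Fin p) => ‖t‖ ^ (-r))
      (ball (0 : EuclideanSpace ℝ (Fin p)) 1)ᶜ volume := by
  have hint : Integrable (fun t : EuclideanSpace ℝ (Fin p) =>
      (2:ℝ) ^ r * (1 + ‖t‖) ^ (-r)) volume := by
    refine Integrable.const_mul ?_ _
    exact integrable_one_add_norm (by rw [finrank_euclideanSpace_fin]; exact hr)
  refine Integrable.mono' hint.integrableOn
    ((measurable_norm.pow_const _).aestronglyMeasurable) ?_
  rw [ae_restrict_iff' measurableSet_ball.compl]
  filter_upwards with t ht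
  have h1 : (1:ℝ) ≤ ‖t‖ := by
    simpa [dist_zero_right] using (mem_compl_iff _ _).mp ht
  have h0 : (0:ℝ) < ‖t‖ := lt_of_lt_of_le one_pos h1
  have hr0 : (0:ℝ) ≤ r := le_of_lt (lt_of_le_of_lt (Nat.cast_nonneg p) hr)
  rw [Real.norm_eq_abs, abs_of_nonneg (Real.rpow_nonneg (norm_nonneg t) _)]
  rw [Real.rpow_neg (norm_nonneg t), Real.rpow_neg (by positivity)]
  have hle : (1 + ‖t‖) ^ r ≤ 2 ^ r * ‖t‖ ^ r := by
    rw [← Real.mul_rpow (by norm_num) (norm_nonneg t)]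
    exact Real.rpow_le_rpow (by positivity) (by linarith) hr0
  have h2r : (0:ℝ) < 2 ^ r := Real.rpow_pos_of_pos two_pos r
  have hpos : (0:ℝ) < ‖t‖ ^ r := Real.rpow_pos_of_pos h0 r
  calc (‖t‖ ^ r)⁻¹ = 2 ^ r * (2 ^ r * ‖t‖ ^ r)⁻¹ := by
        field_simp
    _ ≤ 2 ^ r * ((1 + ‖t‖) ^ r)⁻¹ := by
        gcongr

variable {Ω : Type*} [MeasureSpace Ω] [IsProbabilityMeasure (ℙ : Measure Ω)] {p : ℕ}

lemma charMeas (X : Ω → EuclideanSpace ℝ (Fin p)) (hX : Measurable X)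
    (t : EuclideanSpace ℝ (Fin p)) :
    Measurable fun ω => Complex.exp (Complex.I * ((inner ℝ t (X ω) : ℝ) : ℂ)) := by
  have m1 : Measurable fun ω => (inner ℝ t (X ω) : ℝ) := measurable_const.inner hX
  exact Complex.measurable_exp.comp ((Complex.measurable_ofReal.comp m1).const_mul _)

lemma charInt (X : Ω → EuclideanSpace ℝ (Fin p)) (hX : Measurable X)
    (t : EuclideanSpace ℝ (Fin p)) :
    Integrable (fun ω => Complex.exp (Complex.I * ((inner ℝ t (X ω) : ℝ) : ℂ))) ℙ := by
  refine (integrable_const (1:ℝ)).mono' ((charMeas X hX t).aestronglyMeasurable) ?_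
  exact Filter.Eventually.of_forall fun ω => le_of_eq (exp_I_norm _)

lemma expIntNorm_le (g : Ω → ℝ) :
    ‖∫ ω, Complex.exp (Complex.I * ((g ω : ℝ) : ℂ))‖ ≤ 1 := by
  calc ‖∫ ω, Complex.exp (Complex.I * ((g ω : ℝ) : ℂ))‖
      ≤ ∫ ω, ‖Complex.exp (Complex.I * ((g ω : ℝ) : ℂ))‖ :=
        norm_integral_le_integral_norm _
    _ = ∫ (_ : Ω), (1:ℝ) := by congr 1; ext ω; exact exp_I_norm _
    _ = 1 := by simp

lemma charNorm_le (X : Ω → EuclideanSpace ℝ (Fin p)) (t : EuclideanSpace ℝ (Fin p)) :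
    ‖∫ ω, Complex.exp (Complex.I * ((inner ℝ t (X ω) : ℝ) : ℂ))‖ ≤ 1 :=
  expIntNorm_le _

lemma charCont (X : Ω → EuclideanSpace ℝ (Fin p)) (hX : Measurable X) :
    Continuous fun t : EuclideanSpace ℝ (Fin p) =>
      ∫ ω, Complex.exp (Complex.I * ((inner ℝ t (X ω) : ℝ) : ℂ)) := by
  apply continuous_of_dominated (bound := fun _ => (1:ℝ))
  · exact fun t => (charMeas X hX t).aestronglyMeasurable
  · exact fun t => Filter.Eventually.of_forall fun ω => le_of_eq (exp_I_norm _)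
  · exact integrable_const 1
  · refine Filter.Eventually.of_forall fun ω => ?_
    have : Continuous fun t : EuclideanSpace ℝ (Fin p) => (inner ℝ t (X ω) : ℝ) :=
      continuous_id.inner continuous_const
    exact Complex.continuous_exp.comp (continuous_const.mul (Complex.continuous_ofReal.comp this))

lemma momβ (X : Ω → EuclideanSpace ℝ (Fin p)) (hX : Measurable X) {α β : ℝ}
    (hβ0 : 0 < β) (hβα : β ≤ α)
    (hmom : Integrable (fun ω => ‖X ω‖ ^ α) (ℙ : Measure Ω)) :
    Integrable (fun ω => ‖X ω‖ ^ β) (ℙ : Measure Ω) := by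
  refine ((integrable_const (1:ℝ)).add hmom).mono'
    ((hX.norm.pow_const β).aestronglyMeasurable) ?_
  refine Filter.Eventually.of_forall fun ω => ?_
  simp only [Pi.add_apply]
  rw [Real.norm_eq_abs, abs_of_nonneg (Real.rpow_nonneg (norm_nonneg _) _)]
  rcases le_total (‖X ω‖) 1 with h | h
  · have h1 : ‖X ω‖ ^ β ≤ 1 := Real.rpow_le_one (norm_nonneg _) h hβ0.le
    have h2 : (0:ℝ) ≤ ‖X ω‖ ^ α := Real.rpow_nonneg (norm_nonneg _) _
    simpa using add_le_add h1 h2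
  · have h1 : ‖X ω‖ ^ β ≤ ‖X ω‖ ^ α := Real.rpow_le_rpow_of_exponent_le h hβα
    nlinarith

lemma inner_exp_sub_one {β : ℝ} (hβ0 : 0 ≤ β) (hβ1 : β ≤ 1) (t x : EuclideanSpace ℝ (Fin p)) :
    ‖Complex.exp (Complex.I * ((inner ℝ t x : ℝ) : ℂ)) - 1‖ ≤ 2 * ‖t‖ ^ β * ‖x‖ ^ β := by
  calc ‖Complex.exp (Complex.I * ((inner ℝ t x : ℝ) : ℂ)) - 1‖
      ≤ 2 * |(inner ℝ t x : ℝ)| ^ β := exp_I_sub_one hβ0 hβ1 _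
    _ ≤ 2 * (‖t‖ * ‖x‖) ^ β := by
        have := Real.rpow_le_rpow (abs_nonneg _) (abs_real_inner_le_norm t x) hβ0
        linarith
    _ = 2 * ‖t‖ ^ β * ‖x‖ ^ β := by
        rw [Real.mul_rpow (norm_nonneg t) (norm_nonneg x)]; ring

lemma Dbound {β : ℝ} (hβ0 : 0 < β) (hβ1 : β ≤ 1)
    (X Y : Ω → EuclideanSpace ℝ (Fin p)) (hX : Measurable X) (hY : Measurable Y)
    (hbX : Integrable (fun ω => ‖X ω‖ ^ β) (ℙ : Measure Ω))
    (hbY : Integrable (fun ω => ‖Y ω‖ ^ β) (ℙ : Measure Ω))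
    (t : EuclideanSpace ℝ (Fin p)) :
    ‖(∫ ω, Complex.exp (Complex.I *
            (((inner ℝ t (X ω) : ℝ) + (inner ℝ t (Y ω) : ℝ) : ℝ) : ℂ))) -
          (∫ ω, Complex.exp (Complex.I * ((inner ℝ t (X ω) : ℝ) : ℂ))) *
            (∫ ω, Complex.exp (Complex.I * ((inner ℝ t (Y ω) : ℝ) : ℂ)))‖ ≤
      4 * ‖t‖ ^ β * ((∫ ω, ‖X ω‖ ^ β) + (∫ ω, ‖Y ω‖ ^ β)) := by
  set U : Ω → ℂ := fun ω => Complex.exp (Complex.I * ((inner ℝ t (X ω) : ℝ) : ℂ)) with hUdef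
  set V : Ω → ℂ := fun ω => Complex.exp (Complex.I * ((inner ℝ t (Y ω) : ℝ) : ℂ)) with hVdef
  have hW : ∀ ω, Complex.exp (Complex.I *
      (((inner ℝ t (X ω) : ℝ) + (inner ℝ t (Y ω) : ℝ) : ℝ) : ℂ)) = U ω * V ω := by
    intro ω
    rw [hUdef, hVdef]
    push_cast
    rw [mul_add, Complex.exp_add]
  have hU : Integrable U ℙ := charInt X hX t
  have hV : Integrable V ℙ := charInt Y hY t
  have hUV : Integrable (fun ω => U ω * V ω) ℙ := by
    refine (integrable_const (1:ℝ)).mono'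
      (((charMeas X hX t).mul (charMeas Y hY t)).aestronglyMeasurable) ?_
    refine Filter.Eventually.of_forall fun ω => ?_
    rw [norm_mul, exp_I_norm, exp_I_norm]; norm_num
  have hnormU : Integrable (fun ω => ‖U ω - 1‖) ℙ := (hU.sub (integrable_const 1)).norm
  have hnormV : Integrable (fun ω => ‖V ω - 1‖) ℙ := (hV.sub (integrable_const 1)).norm
  have hMX : ∫ ω, ‖U ω - 1‖ ≤ 2 * ‖t‖ ^ β * (∫ ω, ‖X ω‖ ^ β) := by
    rw [← MeasureTheory.integral_const_mul]
    exact integral_mono hnormU (hbX.const_mul _) fun ω =>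
      inner_exp_sub_one hβ0.le hβ1 t (X ω)
  have hMY : ∫ ω, ‖V ω - 1‖ ≤ 2 * ‖t‖ ^ β * (∫ ω, ‖Y ω‖ ^ β) := by
    rw [← MeasureTheory.integral_const_mul]
    exact integral_mono hnormV (hbY.const_mul _) fun ω =>
      inner_exp_sub_one hβ0.le hβ1 t (Y ω)
  have hterm1 : ‖(∫ ω, U ω * V ω) - 1‖ ≤
      (∫ ω, ‖U ω - 1‖) + (∫ ω, ‖V ω - 1‖) := by
    have : (∫ ω, U ω * V ω) - 1 = ∫ ω, (U ω * V ω - 1) := by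
      rw [integral_sub hUV (integrable_const 1)]
      simp
    rw [this]
    calc ‖∫ ω, (U ω * V ω - 1)‖ ≤ ∫ ω, ‖U ω * V ω - 1‖ :=
        by exact norm_integral_le_integral_norm _
      _ ≤ ∫ ω, (‖U ω - 1‖ + ‖V ω - 1‖) := by
          refine integral_mono ((hUV.sub (integrable_const 1)).norm) (hnormU.add hnormV)
            fun ω => ?_
          calc ‖U ω * V ω - 1‖ = ‖U ω * (V ω - 1) + (U ω - 1)‖ := by ring_nf
        _ ≤ ‖U ω * (V ω - 1)‖ + ‖U ω - 1‖ := norm_add_le _ _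
        _ = ‖U ω - 1‖ + ‖V ω - 1‖ := by
            rw [norm_mul, hUdef, exp_I_norm, one_mul]; ring
      _ = (∫ ω, ‖U ω - 1‖) + (∫ ω, ‖V ω - 1‖) := integral_add hnormU hnormV
  have habsU : ‖∫ ω, U ω‖ ≤ 1 := charNorm_le X t
  have hsubU : ‖1 - ∫ ω, U ω‖ ≤ ∫ ω, ‖U ω - 1‖ := by
    have : (1:ℂ) - (∫ ω, U ω) = -∫ ω, (U ω - 1) := by
      rw [integral_sub hU (integrable_const 1)]
      simp
    rw [this, norm_neg]
    exact norm_integral_le_integral_norm _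
  have hsubV : ‖1 - ∫ ω, V ω‖ ≤ ∫ ω, ‖V ω - 1‖ := by
    have : (1:ℂ) - (∫ ω, V ω) = -∫ ω, (V ω - 1) := by
      rw [integral_sub hV (integrable_const 1)]
      simp
    rw [this, norm_neg]
    exact norm_integral_le_integral_norm _
  have hterm2 : ‖1 - (∫ ω, U ω) * (∫ ω, V ω)‖ ≤
      (∫ ω, ‖U ω - 1‖) + (∫ ω, ‖V ω - 1‖) := by
    have hdecomp : (1:ℂ) - (∫ ω, U ω) * (∫ ω, V ω) =
        (1 - ∫ ω, U ω) + (∫ ω, U ω) * (1 - ∫ ω, V ω) := by ring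
    rw [hdecomp]
    calc ‖(1 - ∫ ω, U ω) + (∫ ω, U ω) * (1 - ∫ ω, V ω)‖
        ≤ ‖1 - ∫ ω, U ω‖ + ‖(∫ ω, U ω) * (1 - ∫ ω, V ω)‖ :=
          norm_add_le _ _
      _ ≤ (∫ ω, ‖U ω - 1‖) + 1 * ‖1 - ∫ ω, V ω‖ := by
          rw [norm_mul]
          gcongr
      _ ≤ (∫ ω, ‖U ω - 1‖) + (∫ ω, ‖V ω - 1‖) := by
          rw [one_mul]
          gcongr
  have hkey : (∫ ω, Complex.exp (Complex.I *
      (((inner ℝ t (X ω) : ℝ) + (inner ℝ t (Y ω) : ℝ) : ℝ) : ℂ))) = ∫ ω, U ω * V ω := by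
    congr 1; ext ω; exact hW ω
  rw [hkey]
  have hsplit : (∫ ω, U ω * V ω) - (∫ ω, U ω) * (∫ ω, V ω) =
      ((∫ ω, U ω * V ω) - 1) + (1 - (∫ ω, U ω) * (∫ ω, V ω)) := by ring
  rw [hsplit]
  calc ‖((∫ ω, U ω * V ω) - 1) + (1 - (∫ ω, U ω) * (∫ ω, V ω))‖
      ≤ ‖(∫ ω, U ω * V ω) - 1‖ +
        ‖1 - (∫ ω, U ω) * (∫ ω, V ω)‖ := norm_add_le _ _
    _ ≤ ((∫ ω, ‖U ω - 1‖) + (∫ ω, ‖V ω - 1‖)) +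
        ((∫ ω, ‖U ω - 1‖) + (∫ ω, ‖V ω - 1‖)) := by gcongr
    _ ≤ (2 * ‖t‖ ^ β * (∫ ω, ‖X ω‖ ^ β) + 2 * ‖t‖ ^ β * (∫ ω, ‖Y ω‖ ^ β)) +
        (2 * ‖t‖ ^ β * (∫ ω, ‖X ω‖ ^ β) + 2 * ‖t‖ ^ β * (∫ ω, ‖Y ω‖ ^ β)) := by
        gcongr
    _ = 4 * ‖t‖ ^ β * ((∫ ω, ‖X ω‖ ^ β) + (∫ ω, ‖Y ω‖ ^ β)) := by ring

lemma Dzero (X Y : Ω → EuclideanSpace ℝ (Fin p)) :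
    (∫ ω, Complex.exp (Complex.I *
        (((inner ℝ (0 : EuclideanSpace ℝ (Fin p)) (X ω) : ℝ) +
          (inner ℝ (0 : EuclideanSpace ℝ (Fin p)) (Y ω) : ℝ) : ℝ) : ℂ))) =
      (∫ ω, Complex.exp (Complex.I * ((inner ℝ (0 : EuclideanSpace ℝ (Fin p)) (X ω) : ℝ) : ℂ))) *
        (∫ ω, Complex.exp (Complex.I * ((inner ℝ (0 : EuclideanSpace ℝ (Fin p)) (Y ω) : ℝ) : ℂ))) := by
  simp [inner_zero_left]

end Aux
theorem stmt6 {Ω : Type*} [MeasureSpace Ω] [IsProbabilityMeasure (ℙ : Measure Ω)]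
    {p : ℕ} (X Y : Ω → EuclideanSpace ℝ (Fin p))
    (hX : Measurable X) (hY : Measurable Y)
    {α : ℝ} (hα : 0 < α) (hα2 : α < 2)
    (hmomX : Integrable (fun ω => ‖X ω‖ ^ α) (ℙ : Measure Ω))
    (hmomY : Integrable (fun ω => ‖Y ω‖ ^ α) (ℙ : Measure Ω)) :
    (∫ t : EuclideanSpace ℝ (Fin p),
        ((‖·‖)
            ((∫ ω, Complex.exp (Complex.I *
                (((inner ℝ t (X ω) : ℝ) + (inner ℝ t (Y ω) : ℝ) : ℝ) : ℂ))) -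
              (∫ ω, Complex.exp (Complex.I * ((inner ℝ t (X ω) : ℝ) : ℂ))) *
                (∫ ω, Complex.exp (Complex.I * ((inner ℝ t (Y ω) : ℝ) : ℂ))))) ^ 2 *
          rhoWeight p α t) = 0 ↔
      ∀ t : EuclideanSpace ℝ (Fin p),
        (∫ ω, Complex.exp (Complex.I *
            (((inner ℝ t (X ω) : ℝ) + (inner ℝ t (Y ω) : ℝ) : ℝ) : ℂ))) =
          (∫ ω, Complex.exp (Complex.I * ((inner ℝ t (X ω) : ℝ) : ℂ))) *
            (∫ ω, Complex.exp (Complex.I * ((inner ℝ t (Y ω) : ℝ) : ℂ))) := by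
  classical
  rcases Nat.eq_zero_or_pos p with rfl | hp
  · -- trivial case p = 0
    have hrho : ∀ t : EuclideanSpace ℝ (Fin 0), rhoWeight 0 α t = 0 := by
      intro t
      have ht : t = 0 := Subsingleton.elim _ _
      rw [ht]
      unfold rhoWeight
      rw [norm_zero, Real.zero_rpow (by push_cast; linarith), mul_zero]
    constructor
    · intro _ t
      have ht : t = 0 := Subsingleton.elim _ _
      rw [ht]
      exact Dzero X Y
    · intro _
      simp only [hrho, mul_zero, integral_zero]
  -- main case p ≥ 1
  have hp1 : (1:ℝ) ≤ (p:ℝ) := by exact_mod_cast hp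
  set β : ℝ := min 1 (3 * α / 4) with hβdef
  have hβ0 : 0 < β := lt_min one_pos (by linarith)
  have hβ1 : β ≤ 1 := min_le_left _ _
  have hβα : β ≤ α := le_trans (min_le_right _ _) (by linarith)
  have hαβ : α < 2 * β := by
    have := lt_min (show α / 2 < 1 by linarith) (show α / 2 < 3 * α / 4 by linarith)
    rw [← hβdef] at this
    linarith
  have h2βp : 2 * β < α + p := by
    rcases le_total (3 * α / 4) 1 with h | h
    · have hb : β ≤ 3 * α / 4 := min_le_right _ _
      linarith
    · have h43 : (4:ℝ)/3 ≤ α := by linarith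
      linarith
  have hbX : Integrable (fun ω => ‖X ω‖ ^ β) (ℙ : Measure Ω) := momβ X hX hβ0 hβα hmomX
  have hbY : Integrable (fun ω => ‖Y ω‖ ^ β) (ℙ : Measure Ω) := momβ Y hY hβ0 hβα hmomY
  set M : ℝ := (∫ ω, ‖X ω‖ ^ β) + (∫ ω, ‖Y ω‖ ^ β) with hMdef
  have hM0 : 0 ≤ M := add_nonneg
    (integral_nonneg fun ω => Real.rpow_nonneg (norm_nonneg _) _)
    (integral_nonneg fun ω => Real.rpow_nonneg (norm_nonneg _) _)
  have hc : 0 < cConst p α := by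
    have h1 : 0 < Real.Gamma (1 - α / 2) := Real.Gamma_pos_of_pos (by linarith)
    have h2 : 0 < Real.Gamma ((α + p) / 2) := Real.Gamma_pos_of_pos (by positivity)
    unfold cConst
    apply div_pos
    · exact mul_pos (mul_pos two_pos (Real.rpow_pos_of_pos Real.pi_pos _)) h1
    · exact mul_pos (mul_pos hα (Real.rpow_pos_of_pos two_pos _)) h2
  have hrho0 : ∀ t : EuclideanSpace ℝ (Fin p), 0 ≤ rhoWeight p α t := fun t =>
    mul_nonneg (inv_nonneg.mpr hc.le) (Real.rpow_nonneg (norm_nonneg t) _)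
  have hrhopos : ∀ t : EuclideanSpace ℝ (Fin p), t ≠ 0 → 0 < rhoWeight p α t := by
    intro t ht
    exact mul_pos (inv_pos.mpr hc) (Real.rpow_pos_of_pos (norm_pos_iff.mpr ht) _)
  set F : EuclideanSpace ℝ (Fin p) → ℂ := fun t =>
    (∫ ω, Complex.exp (Complex.I *
        (((inner ℝ t (X ω) : ℝ) + (inner ℝ t (Y ω) : ℝ) : ℝ) : ℂ))) -
      (∫ ω, Complex.exp (Complex.I * ((inner ℝ t (X ω) : ℝ) : ℂ))) *
        (∫ ω, Complex.exp (Complex.I * ((inner ℝ t (Y ω) : ℝ) : ℂ))) with hFdef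
  have hFbound : ∀ t, ‖F t‖ ≤ 4 * ‖t‖ ^ β * M :=
    fun t => Dbound hβ0 hβ1 X Y hX hY hbX hbY t
  have hF2 : ∀ t, ‖F t‖ ≤ 2 := by
    intro t
    rw [hFdef]
    simp only
    refine le_trans (norm_sub_le _ _) ?_
    rw [norm_mul]
    have h1 := expIntNorm_le (Ω := Ω)
      (fun ω => ((inner ℝ t (X ω) : ℝ) + (inner ℝ t (Y ω) : ℝ) : ℝ))
    have h2 := expIntNorm_le (Ω := Ω) (fun ω => (inner ℝ t (X ω) : ℝ))
    have h3 := expIntNorm_le (Ω := Ω) (fun ω => (inner ℝ t (Y ω) : ℝ))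
    nlinarith [norm_nonneg (∫ ω, Complex.exp (Complex.I * ((inner ℝ t (X ω) : ℝ) : ℂ))),
      norm_nonneg (∫ ω, Complex.exp (Complex.I * ((inner ℝ t (Y ω) : ℝ) : ℂ)))]
  have hFcont : Continuous F := by
    rw [hFdef]
    apply Continuous.sub
    · have h3 := charCont (fun ω => X ω + Y ω) (hX.add hY)
      simp only [inner_add_right] at h3
      exact h3
    · exact (charCont X hX).mul (charCont Y hY)
  have hFmeas : Measurable fun t => (‖F t‖) ^ 2 * rhoWeight p α t := by
    apply Measurable.mul
    · exact (continuous_norm.measurable.comp hFcont.measurable).pow_const 2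
    · unfold rhoWeight
      exact (measurable_norm.pow_const _).const_mul _
  have hs0 : 2 * β - α - (p:ℝ) < 0 := by linarith
  have hs : -(p:ℝ) < 2 * β - α - (p:ℝ) := by linarith
  have hint : Integrable (fun t => (‖F t‖) ^ 2 * rhoWeight p α t) volume := by
    rw [← integrableOn_univ,
      ← Set.union_compl_self (Metric.ball (0 : EuclideanSpace ℝ (Fin p)) 1)]
    apply IntegrableOn.union
    · refine Integrable.mono'
        ((ballInt hs hs0).const_mul ((cConst p α)⁻¹ * (4 * M) ^ 2))
        hFmeas.aestronglyMeasurable.restrict ?_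
      refine Filter.Eventually.of_forall fun t => ?_
      rw [Real.norm_eq_abs,
        abs_of_nonneg (mul_nonneg (pow_nonneg (norm_nonneg _) 2) (hrho0 t))]
      have e1 : (‖t‖ ^ β) ^ 2 = ‖t‖ ^ (2 * β) := by
        rw [← Real.rpow_natCast (‖t‖ ^ β) 2, ← Real.rpow_mul (norm_nonneg t)]
        norm_num [mul_comm]
      have e2 : ‖t‖ ^ (2 * β) * ‖t‖ ^ (-α - (p:ℝ)) = ‖t‖ ^ (2 * β - α - (p:ℝ)) := by
        have h3 : 2 * β - α - (p:ℝ) = 2 * β + (-α - (p:ℝ)) := by ring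
        rw [h3, Real.rpow_add' (norm_nonneg t) (by rw [← h3]; exact hs0.ne)]
      calc (‖F t‖) ^ 2 * rhoWeight p α t
          ≤ (4 * ‖t‖ ^ β * M) ^ 2 * rhoWeight p α t := by
            have := hFbound t
            have h4 : (‖F t‖) ^ 2 ≤ (4 * ‖t‖ ^ β * M) ^ 2 :=
              pow_le_pow_left₀ (norm_nonneg _) this 2
            exact mul_le_mul_of_nonneg_right h4 (hrho0 t)
        _ = (cConst p α)⁻¹ * (4 * M) ^ 2 * ((‖t‖ ^ β) ^ 2 * ‖t‖ ^ (-α - (p:ℝ))) := by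
            unfold rhoWeight
            ring
        _ = (cConst p α)⁻¹ * (4 * M) ^ 2 * ‖t‖ ^ (2 * β - α - (p:ℝ)) := by
            rw [e1, e2]
    · refine Integrable.mono'
        ((complInt (show (p:ℝ) < α + p by linarith)).const_mul (4 * (cConst p α)⁻¹))
        hFmeas.aestronglyMeasurable.restrict ?_
      refine Filter.Eventually.of_forall fun t => ?_
      rw [Real.norm_eq_abs,
        abs_of_nonneg (mul_nonneg (pow_nonneg (norm_nonneg _) 2) (hrho0 t))]
      have h4 : (‖F t‖) ^ 2 ≤ 4 := by
        nlinarith [hF2 t, norm_nonneg (F t)]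
      calc (‖F t‖) ^ 2 * rhoWeight p α t
          ≤ 4 * rhoWeight p α t := mul_le_mul_of_nonneg_right h4 (hrho0 t)
        _ = 4 * (cConst p α)⁻¹ * ‖t‖ ^ (-(α + (p:ℝ))) := by
            unfold rhoWeight
            rw [show -(α + (p:ℝ)) = -α - (p:ℝ) by ring]
            ring
  constructor
  · intro h
    have hnn : 0 ≤ fun t => (‖F t‖) ^ 2 * rhoWeight p α t := fun t =>
      mul_nonneg (pow_nonneg (norm_nonneg _) 2) (hrho0 t)
    have h0 := (integral_eq_zero_iff_of_nonneg hnn hint).mp h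
    have hFae : F =ᵐ[volume] (fun _ => (0:ℂ)) := by
      filter_upwards [h0] with t ht
      rcases eq_or_ne t 0 with rfl | hne
      · show F 0 = 0
        rw [hFdef]
        exact sub_eq_zero.mpr (Dzero X Y)
      · have ht' : (‖F t‖) ^ 2 * rhoWeight p α t = 0 := ht
        rcases mul_eq_zero.mp ht' with h1 | h1
        · have := (pow_eq_zero_iff two_ne_zero).mp h1
          show F t = 0
          exact norm_eq_zero.mp this
        · exact absurd h1 (hrhopos t hne).ne'
    have hF0 : F = fun _ => (0:ℂ) :=
      (Continuous.ae_eq_iff_eq volume hFcont continuous_const).mp hFae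
    intro t
    have := congrFun hF0 t
    rw [hFdef] at this
    simpa [sub_eq_zero] using this
  · intro h
    have hzero : (fun t : EuclideanSpace ℝ (Fin p) =>
        ((‖·‖)
            ((∫ ω, Complex.exp (Complex.I *
                (((inner ℝ t (X ω) : ℝ) + (inner ℝ t (Y ω) : ℝ) : ℝ) : ℂ))) -
              (∫ ω, Complex.exp (Complex.I * ((inner ℝ t (X ω) : ℝ) : ℂ))) *
                (∫ ω, Complex.exp (Complex.I * ((inner ℝ t (Y ω) : ℝ) : ℂ))))) ^ 2 *
          rhoWeight p α t) = fun _ => (0:ℝ) := by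
      funext t
      simp only [h t, sub_self, norm_zero]
      ring
    rw [hzero]
    simp
end

section
/- For all constant vectors a₁, a₂ ∈ ℝ^p, scalar b ∈ ℝ, and p×p orthogonal matrix C, siCov^(α)(a₁ + bCX, a₂ + bCY) = |b|^α · siCov^(α)(X,Y). -/
open MeasureTheory ProbabilityTheory Real

/-- The α-sub-independent covariance of two ℝ^p-valued random vectors. -/
noncomputable def siCov {Ω : Type*} [MeasureSpace Ω] {p : ℕ} (α : ℝ)
    (X Y : Ω → EuclideanSpace ℝ (Fin p)) : ℝ :=
  ∫ t : EuclideanSpace ℝ (Fin p),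
    (‖
        ((∫ ω, Complex.exp (Complex.I *
            (((inner ℝ t (X ω) : ℝ) + (inner ℝ t (Y ω) : ℝ) : ℝ) : ℂ))) -
          (∫ ω, Complex.exp (Complex.I * ((inner ℝ t (X ω) : ℝ) : ℂ))) *
            (∫ ω, Complex.exp (Complex.I * ((inner ℝ t (Y ω) : ℝ) : ℂ))))‖) ^ 2 *
      rhoWeight p α t

/-- Auxiliary: the difference of characteristic functions appearing in `siCov`. -/
noncomputable def Fdiff {Ω : Type*} [MeasureSpace Ω] {p : ℕ}
    (X Y : Ω → EuclideanSpace ℝ (Fin p)) (s : EuclideanSpace ℝ (Fin p)) : ℂ :=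
  (∫ ω, Complex.exp (Complex.I *
      (((inner ℝ s (X ω) : ℝ) + (inner ℝ s (Y ω) : ℝ) : ℝ) : ℂ))) -
    (∫ ω, Complex.exp (Complex.I * ((inner ℝ s (X ω) : ℝ) : ℂ))) *
      (∫ ω, Complex.exp (Complex.I * ((inner ℝ s (Y ω) : ℝ) : ℂ)))

lemma siCov_eq_Fdiff {Ω : Type*} [MeasureSpace Ω] {p : ℕ} (α : ℝ)
    (X Y : Ω → EuclideanSpace ℝ (Fin p)) :
    siCov α X Y = ∫ t : EuclideanSpace ℝ (Fin p),
      (‖Fdiff X Y t‖) ^ 2 * rhoWeight p α t := rfl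

lemma Fdiff_zero {Ω : Type*} [MeasureSpace Ω] [IsProbabilityMeasure (ℙ : Measure Ω)]
    {p : ℕ} (X Y : Ω → EuclideanSpace ℝ (Fin p)) : Fdiff X Y 0 = 0 := by
  simp [Fdiff]

/-- Affine-transformation identity for `Fdiff`. -/
lemma Fdiff_affine {Ω : Type*} [MeasureSpace Ω] {p : ℕ}
    (X Y : Ω → EuclideanSpace ℝ (Fin p)) (a₁ a₂ : EuclideanSpace ℝ (Fin p)) (b : ℝ)
    (C : EuclideanSpace ℝ (Fin p) ≃ₗᵢ[ℝ] EuclideanSpace ℝ (Fin p))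
    (t : EuclideanSpace ℝ (Fin p)) :
    Fdiff (fun ω => a₁ + b • C (X ω)) (fun ω => a₂ + b • C (Y ω)) t =
      Complex.exp (Complex.I * ((inner ℝ t a₁ : ℝ) : ℂ)) *
        Complex.exp (Complex.I * ((inner ℝ t a₂ : ℝ) : ℂ)) *
        Fdiff X Y (b • C.symm t) := by
  have hC : ∀ (a x : EuclideanSpace ℝ (Fin p)),
      (inner ℝ t (a + b • C x) : ℝ) = (inner ℝ t a : ℝ) + (inner ℝ (b • C.symm t) x : ℝ) := by
    intro a x
    rw [inner_add_right, real_inner_smul_right, real_inner_smul_left]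
    congr 2
    rw [← C.inner_map_map (C.symm t) x, C.apply_symm_apply]
  set u := b • C.symm t with hu
  have hjoint : (∫ ω, Complex.exp (Complex.I *
        (((inner ℝ t (a₁ + b • C (X ω)) : ℝ) + (inner ℝ t (a₂ + b • C (Y ω)) : ℝ) : ℝ) : ℂ))) =
      Complex.exp (Complex.I * ((inner ℝ t a₁ : ℝ) : ℂ)) *
        Complex.exp (Complex.I * ((inner ℝ t a₂ : ℝ) : ℂ)) *
        ∫ ω, Complex.exp (Complex.I *
          (((inner ℝ u (X ω) : ℝ) + (inner ℝ u (Y ω) : ℝ) : ℝ) : ℂ)) := by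
    rw [mul_assoc, ← integral_const_mul, ← integral_const_mul]
    congr 1; funext ω
    rw [hC a₁ (X ω), hC a₂ (Y ω), ← Complex.exp_add, ← Complex.exp_add]
    congr 1
    push_cast
    ring
  have hX1 : (∫ ω, Complex.exp (Complex.I * ((inner ℝ t (a₁ + b • C (X ω)) : ℝ) : ℂ))) =
      Complex.exp (Complex.I * ((inner ℝ t a₁ : ℝ) : ℂ)) *
        ∫ ω, Complex.exp (Complex.I * ((inner ℝ u (X ω) : ℝ) : ℂ)) := by
    rw [← integral_const_mul]
    congr 1; funext ω
    rw [hC a₁ (X ω), ← Complex.exp_add]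
    congr 1
    push_cast
    ring
  have hY1 : (∫ ω, Complex.exp (Complex.I * ((inner ℝ t (a₂ + b • C (Y ω)) : ℝ) : ℂ))) =
      Complex.exp (Complex.I * ((inner ℝ t a₂ : ℝ) : ℂ)) *
        ∫ ω, Complex.exp (Complex.I * ((inner ℝ u (Y ω) : ℝ) : ℂ)) := by
    rw [← integral_const_mul]
    congr 1; funext ω
    rw [hC a₂ (Y ω), ← Complex.exp_add]
    congr 1
    push_cast
    ring
  simp only [Fdiff]
  rw [hjoint, hX1, hY1]
  ring

theorem stmt8 {Ω : Type*} [MeasureSpace Ω] [IsProbabilityMeasure (ℙ : Measure Ω)]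
    {p : ℕ} (X Y : Ω → EuclideanSpace ℝ (Fin p))
    (hX : Measurable X) (hY : Measurable Y)
    {α : ℝ} (hα : 0 < α) (hα2 : α < 2)
    (hmomX : Integrable (fun ω => ‖X ω‖ ^ α) (ℙ : Measure Ω))
    (hmomY : Integrable (fun ω => ‖Y ω‖ ^ α) (ℙ : Measure Ω))
    (a₁ a₂ : EuclideanSpace ℝ (Fin p)) (b : ℝ)
    (C : EuclideanSpace ℝ (Fin p) ≃ₗᵢ[ℝ] EuclideanSpace ℝ (Fin p)) :
    siCov α (fun ω => a₁ + b • C (X ω)) (fun ω => a₂ + b • C (Y ω)) =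
      |b| ^ α * siCov α X Y := by
  have habs : ∀ (r : ℝ), ‖Complex.exp (Complex.I * (r : ℂ))‖ = 1 := by
    intro r
    rw [mul_comm]
    exact Complex.norm_exp_ofReal_mul_I r
  have hLHS : siCov α (fun ω => a₁ + b • C (X ω)) (fun ω => a₂ + b • C (Y ω)) =
      ∫ t : EuclideanSpace ℝ (Fin p),
        (‖Fdiff X Y (b • C.symm t)‖) ^ 2 * rhoWeight p α t := by
    rw [siCov_eq_Fdiff]
    congr 1; funext t
    rw [Fdiff_affine X Y a₁ a₂ b C t, norm_mul, norm_mul, habs, habs, one_mul, one_mul]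
  rcases eq_or_ne b 0 with rfl | hb
  · rw [hLHS]
    simp [Fdiff_zero X Y, Real.zero_rpow hα.ne']
  · have hbpos : (0 : ℝ) < |b| := abs_pos.mpr hb
    -- step 1 : remove the isometry using measure preservation
    have hiso : (∫ t : EuclideanSpace ℝ (Fin p),
          (‖Fdiff X Y (b • C.symm t)‖) ^ 2 * rhoWeight p α t) =
        ∫ u : EuclideanSpace ℝ (Fin p),
          (‖Fdiff X Y (b • u)‖) ^ 2 * rhoWeight p α u := by
      have := MeasureTheory.integral_comp C.symm (fun u : EuclideanSpace ℝ (Fin p) =>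
        (‖Fdiff X Y (b • u)‖) ^ 2 * rhoWeight p α u)
      rw [← this]
      congr 1; funext t
      congr 1
      simp only [rhoWeight]
      rw [C.symm.norm_map]
    -- step 2 : rescale the weight
    have hrho : ∀ u : EuclideanSpace ℝ (Fin p),
        rhoWeight p α u = |b| ^ (α + (p : ℝ)) * rhoWeight p α (b • u) := by
      intro u
      simp only [rhoWeight, norm_smul, Real.norm_eq_abs]
      rw [Real.mul_rpow (abs_nonneg b) (norm_nonneg u)]
      have : |b| ^ (α + (p : ℝ)) * |b| ^ (-α - (p : ℝ)) = 1 := by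
        rw [← Real.rpow_add hbpos]
        norm_num
      calc (cConst p α)⁻¹ * ‖u‖ ^ (-α - (p : ℝ))
          = (|b| ^ (α + (p : ℝ)) * |b| ^ (-α - (p : ℝ))) *
            ((cConst p α)⁻¹ * ‖u‖ ^ (-α - (p : ℝ))) := by rw [this, one_mul]
        _ = |b| ^ (α + (p : ℝ)) *
            ((cConst p α)⁻¹ * (|b| ^ (-α - (p : ℝ)) * ‖u‖ ^ (-α - (p : ℝ)))) := by ring
    have hscale : (∫ u : EuclideanSpace ℝ (Fin p),
          (‖Fdiff X Y (b • u)‖) ^ 2 * rhoWeight p α u) =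
        |b| ^ (α + (p : ℝ)) * ∫ u : EuclideanSpace ℝ (Fin p),
          (fun v => (‖Fdiff X Y v‖) ^ 2 * rhoWeight p α v) (b • u) := by
      rw [← integral_const_mul]
      congr 1; funext u
      rw [hrho u]
      ring
    rw [hLHS, hiso, hscale,
      Measure.integral_comp_smul (volume : Measure (EuclideanSpace ℝ (Fin p)))
        (fun v => (‖Fdiff X Y v‖) ^ 2 * rhoWeight p α v) b]
    rw [siCov_eq_Fdiff]
    rw [finrank_euclideanSpace_fin, smul_eq_mul, ← mul_assoc]
    congr 1
    rw [abs_inv, abs_pow, ← Real.rpow_natCast |b| p, ← Real.rpow_neg_one]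
    rw [← Real.rpow_mul (abs_nonneg b), ← Real.rpow_add hbpos]
    congr 1
    ring
end

section
/- The normalized index siCor^(α)(X,Y) = siCov^(α)(X,Y) / ∫_{ℝ^p}(1−|φ_X(t)|²)(1−|φ_Y(t)|²)ρ_α(t)dt satisfies 0 ≤ siCor^(α)(X,Y) ≤ 1 whenever the denominator is positive. -/
open MeasureTheory ProbabilityTheory Real

lemma norm_exp_I_mul_real (x : ℝ) : ‖Complex.exp (Complex.I * x)‖ = 1 := by
  rw [Complex.norm_exp]
  simp [Complex.mul_re]

lemma var_eq {Ω : Type*} [MeasureSpace Ω] [IsProbabilityMeasure (ℙ : Measure Ω)]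
    {f : Ω → ℂ} (hf : AEStronglyMeasurable f (ℙ : Measure Ω))
    (hf1 : ∀ ω, ‖f ω‖ = 1) :
    ∫ ω, ‖f ω - ∫ ω', f ω'‖ ^ 2 = 1 - ‖∫ ω, f ω‖ ^ 2 := by
  set c := ∫ ω, f ω with hc
  have hfint : Integrable f (ℙ : Measure Ω) :=
    (integrable_const (1 : ℝ)).mono' hf (Filter.Eventually.of_forall fun ω => by
      simp [hf1 ω])
  have hre : Integrable (fun ω => (f ω * (starRingEnd ℂ) c).re) (ℙ : Measure Ω) :=
    (Complex.reCLM : ℂ →L[ℝ] ℝ).integrable_comp (hfint.mul_const _)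
  have key : ∀ ω, ‖f ω - c‖ ^ 2
      = 1 + Complex.normSq c - 2 * (f ω * (starRingEnd ℂ) c).re := by
    intro ω
    rw [Complex.sq_norm, Complex.normSq_sub]
    have : Complex.normSq (f ω) = 1 := by
      rw [← Complex.sq_norm, hf1 ω]
      norm_num
    rw [this]
  calc ∫ ω, ‖f ω - c‖ ^ 2
      = ∫ ω, (1 + Complex.normSq c - 2 * (f ω * (starRingEnd ℂ) c).re) := by
        exact integral_congr_ae (Filter.Eventually.of_forall key)
    _ = (1 + Complex.normSq c) - 2 * ∫ ω, (f ω * (starRingEnd ℂ) c).re := by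
        rw [integral_sub (integrable_const _) (hre.const_mul 2), integral_const,
          integral_const_mul]
        simp
    _ = 1 - ‖c‖ ^ 2 := by
        have : ∫ ω, (f ω * (starRingEnd ℂ) c).re = (c * (starRingEnd ℂ) c).re := by
          have h2 := integral_re (μ := (ℙ : Measure Ω)) (hfint.mul_const ((starRingEnd ℂ) c))
          simp only [RCLike.re_to_complex] at h2
          rw [h2, integral_mul_const]
        rw [this, Complex.mul_conj]
        simp [Complex.sq_norm]
        ring

lemma covariance_bound {Ω : Type*} [MeasureSpace Ω] [IsProbabilityMeasure (ℙ : Measure Ω)]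
    {f g : Ω → ℂ} (hf : AEStronglyMeasurable f (ℙ : Measure Ω))
    (hg : AEStronglyMeasurable g (ℙ : Measure Ω))
    (hf1 : ∀ ω, ‖f ω‖ = 1) (hg1 : ∀ ω, ‖g ω‖ = 1) :
    ‖(∫ ω, f ω * g ω) - (∫ ω, f ω) * (∫ ω, g ω)‖ ^ 2
      ≤ (1 - ‖∫ ω, f ω‖ ^ 2) * (1 - ‖∫ ω, g ω‖ ^ 2) := by
  set c := ∫ ω, f ω with hc
  set d := ∫ ω, g ω with hd
  have hnf : ∀ ω, ‖f ω‖ = 1 := fun ω => by rw [hf1 ω]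
  have hng : ∀ ω, ‖g ω‖ = 1 := fun ω => by rw [hg1 ω]
  have hfint : Integrable f (ℙ : Measure Ω) :=
    (integrable_const (1 : ℝ)).mono' hf (Filter.Eventually.of_forall fun ω => by simp [hnf ω])
  have hgint : Integrable g (ℙ : Measure Ω) :=
    (integrable_const (1 : ℝ)).mono' hg (Filter.Eventually.of_forall fun ω => by simp [hng ω])
  have hfgint : Integrable (fun ω => f ω * g ω) (ℙ : Measure Ω) :=
    (integrable_const (1 : ℝ)).mono' (hf.mul hg) (Filter.Eventually.of_forall fun ω => by
      simp [hnf ω, hng ω])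
  -- covariance identity
  have key : ∫ ω, (f ω - c) * (g ω - d) = (∫ ω, f ω * g ω) - c * d := by
    have expand : ∀ ω, (f ω - c) * (g ω - d) = f ω * g ω - f ω * d - c * g ω + c * d := by
      intro ω; ring
    have i1 : Integrable (fun ω => f ω * g ω - f ω * d) (ℙ : Measure Ω) :=
      hfgint.sub (hfint.mul_const d)
    have i2 : Integrable (fun ω => f ω * g ω - f ω * d - c * g ω) (ℙ : Measure Ω) :=
      i1.sub (hgint.const_mul c)
    rw [integral_congr_ae (Filter.Eventually.of_forall expand),
      integral_add i2 (integrable_const _), integral_sub i1 (hgint.const_mul c),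
      integral_sub hfgint (hfint.mul_const d), integral_mul_const, integral_const_mul,
      integral_const]
    simp [← hc, ← hd]
  -- Cauchy-Schwarz
  have hfc : AEStronglyMeasurable (fun ω => f ω - c) (ℙ : Measure Ω) := hf.sub aestronglyMeasurable_const
  have hgd : AEStronglyMeasurable (fun ω => g ω - d) (ℙ : Measure Ω) := hg.sub aestronglyMeasurable_const
  have hmemf : MemLp (fun ω => ‖f ω - c‖) (ENNReal.ofReal 2) (ℙ : Measure Ω) :=
    MemLp.of_bound hfc.norm (1 + ‖c‖) (Filter.Eventually.of_forall fun ω => by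
      rw [norm_norm]
      calc ‖f ω - c‖ ≤ ‖f ω‖ + ‖c‖ := norm_sub_le _ _
        _ = 1 + ‖c‖ := by rw [hnf ω])
  have hmemg : MemLp (fun ω => ‖g ω - d‖) (ENNReal.ofReal 2) (ℙ : Measure Ω) :=
    MemLp.of_bound hgd.norm (1 + ‖d‖) (Filter.Eventually.of_forall fun ω => by
      rw [norm_norm]
      calc ‖g ω - d‖ ≤ ‖g ω‖ + ‖d‖ := norm_sub_le _ _
        _ = 1 + ‖d‖ := by rw [hng ω])
  have hpq : Real.HolderConjugate 2 2 := ⟨by norm_num, by norm_num, by norm_num⟩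
  have CS : ∫ ω, ‖f ω - c‖ * ‖g ω - d‖
      ≤ (∫ ω, ‖f ω - c‖ ^ (2:ℝ)) ^ (1/(2:ℝ)) * (∫ ω, ‖g ω - d‖ ^ (2:ℝ)) ^ (1/(2:ℝ)) :=
    integral_mul_le_Lp_mul_Lq_of_nonneg hpq
      (Filter.Eventually.of_forall fun ω => norm_nonneg _)
      (Filter.Eventually.of_forall fun ω => norm_nonneg _) hmemf hmemg
  have hA : ∫ ω, ‖f ω - c‖ ^ (2:ℝ) = 1 - ‖c‖ ^ 2 := by
    rw [← var_eq hf hf1, ← hc]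
    refine integral_congr_ae (Filter.Eventually.of_forall fun ω => ?_)
    simp only [Real.rpow_two]
  have hB : ∫ ω, ‖g ω - d‖ ^ (2:ℝ) = 1 - ‖d‖ ^ 2 := by
    rw [← var_eq hg hg1, ← hd]
    refine integral_congr_ae (Filter.Eventually.of_forall fun ω => ?_)
    simp only [Real.rpow_two]
  have hA0 : (0:ℝ) ≤ 1 - ‖c‖ ^ 2 := by
    rw [← hA]
    exact integral_nonneg fun ω => Real.rpow_nonneg (norm_nonneg _) _
  have hB0 : (0:ℝ) ≤ 1 - ‖d‖ ^ 2 := by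
    rw [← hB]
    exact integral_nonneg fun ω => Real.rpow_nonneg (norm_nonneg _) _
  have step : ‖(∫ ω, f ω * g ω) - c * d‖
      ≤ (1 - ‖c‖ ^ 2) ^ (1/(2:ℝ)) * (1 - ‖d‖ ^ 2) ^ (1/(2:ℝ)) := by
    rw [← key]
    calc ‖∫ ω, (f ω - c) * (g ω - d)‖ ≤ ∫ ω, ‖(f ω - c) * (g ω - d)‖ :=
          norm_integral_le_integral_norm _
      _ = ∫ ω, ‖f ω - c‖ * ‖g ω - d‖ := by simp [norm_mul]
      _ ≤ _ := by rw [← hA, ← hB]; exact CS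
  calc ‖(∫ ω, f ω * g ω) - c * d‖ ^ 2
      ≤ ((1 - ‖c‖ ^ 2) ^ (1/(2:ℝ)) * (1 - ‖d‖ ^ 2) ^ (1/(2:ℝ))) ^ 2 :=
        pow_le_pow_left₀ (norm_nonneg _) step 2
    _ = (1 - ‖c‖ ^ 2) * (1 - ‖d‖ ^ 2) := by
        rw [mul_pow, ← Real.rpow_natCast ((1 - ‖c‖ ^ 2) ^ (1/(2:ℝ))) 2,
          ← Real.rpow_natCast ((1 - ‖d‖ ^ 2) ^ (1/(2:ℝ))) 2,
          ← Real.rpow_mul hA0, ← Real.rpow_mul hB0]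
        norm_num


theorem stmt9 {Ω : Type*} [MeasureSpace Ω] [IsProbabilityMeasure (ℙ : Measure Ω)]
    {p : ℕ} (X Y : Ω → EuclideanSpace ℝ (Fin p))
    (hX : Measurable X) (hY : Measurable Y)
    {α : ℝ} (hα : 0 < α) (hα2 : α < 2)
    (hmomX : Integrable (fun ω => ‖X ω‖ ^ α) (ℙ : Measure Ω))
    (hmomY : Integrable (fun ω => ‖Y ω‖ ^ α) (ℙ : Measure Ω))
    (hpos : 0 < ∫ t : EuclideanSpace ℝ (Fin p),
        (1 - ‖∫ ω, Complex.exp (Complex.I * ((inner ℝ t (X ω) : ℝ) : ℂ))‖ ^ 2) *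
          (1 - ‖∫ ω, Complex.exp (Complex.I * ((inner ℝ t (Y ω) : ℝ) : ℂ))‖ ^ 2) *
          rhoWeight p α t) :
    0 ≤ (∫ t : EuclideanSpace ℝ (Fin p),
          ‖
              ((∫ ω, Complex.exp (Complex.I *
                  (((inner ℝ t (X ω) : ℝ) + (inner ℝ t (Y ω) : ℝ) : ℝ) : ℂ))) -
                (∫ ω, Complex.exp (Complex.I * ((inner ℝ t (X ω) : ℝ) : ℂ))) *
                  (∫ ω, Complex.exp (Complex.I * ((inner ℝ t (Y ω) : ℝ) : ℂ))))‖ ^ 2 *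
            rhoWeight p α t) /
        (∫ t : EuclideanSpace ℝ (Fin p),
          (1 - ‖∫ ω, Complex.exp (Complex.I * ((inner ℝ t (X ω) : ℝ) : ℂ))‖ ^ 2) *
            (1 - ‖∫ ω, Complex.exp (Complex.I * ((inner ℝ t (Y ω) : ℝ) : ℂ))‖ ^ 2) *
            rhoWeight p α t) ∧
      (∫ t : EuclideanSpace ℝ (Fin p),
          ‖
              ((∫ ω, Complex.exp (Complex.I *
                  (((inner ℝ t (X ω) : ℝ) + (inner ℝ t (Y ω) : ℝ) : ℝ) : ℂ))) -
                (∫ ω, Complex.exp (Complex.I * ((inner ℝ t (X ω) : ℝ) : ℂ))) *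
                  (∫ ω, Complex.exp (Complex.I * ((inner ℝ t (Y ω) : ℝ) : ℂ))))‖ ^ 2 *
            rhoWeight p α t) /
        (∫ t : EuclideanSpace ℝ (Fin p),
          (1 - ‖∫ ω, Complex.exp (Complex.I * ((inner ℝ t (X ω) : ℝ) : ℂ))‖ ^ 2) *
            (1 - ‖∫ ω, Complex.exp (Complex.I * ((inner ℝ t (Y ω) : ℝ) : ℂ))‖ ^ 2) *
            rhoWeight p α t) ≤ 1 := by
  set f := fun (t : EuclideanSpace ℝ (Fin p)) (ω : Ω) =>
    Complex.exp (Complex.I * ((inner ℝ t (X ω) : ℝ) : ℂ)) with hfdef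
  set g := fun (t : EuclideanSpace ℝ (Fin p)) (ω : Ω) =>
    Complex.exp (Complex.I * ((inner ℝ t (Y ω) : ℝ) : ℂ)) with hgdef
  -- rho is nonneg
  have hcpos : 0 < cConst p α := by
    unfold cConst
    have h1 : 0 < Real.Gamma (1 - α / 2) := Real.Gamma_pos_of_pos (by linarith)
    have h2 : 0 < Real.Gamma ((α + p) / 2) := Real.Gamma_pos_of_pos (by positivity)
    positivity
  have hrho : ∀ t, 0 ≤ rhoWeight p α t := fun t =>
    mul_nonneg (inv_nonneg.mpr hcpos.le) (Real.rpow_nonneg (norm_nonneg _) _)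
  -- measurability per ω
  have hfm : ∀ t, AEStronglyMeasurable (f t) (ℙ : Measure Ω) := fun t =>
    (Complex.measurable_exp.comp
      (measurable_const.mul (Complex.measurable_ofReal.comp
        (measurable_const.inner hX)))).aestronglyMeasurable
  have hgm : ∀ t, AEStronglyMeasurable (g t) (ℙ : Measure Ω) := fun t =>
    (Complex.measurable_exp.comp
      (measurable_const.mul (Complex.measurable_ofReal.comp
        (measurable_const.inner hY)))).aestronglyMeasurable
  have hf1 : ∀ t ω, ‖f t ω‖ = 1 := fun t ω => norm_exp_I_mul_real _
  have hg1 : ∀ t ω, ‖g t ω‖ = 1 := fun t ω => norm_exp_I_mul_real _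
  -- pointwise inequality
  have hpt : ∀ t : EuclideanSpace ℝ (Fin p),
      (‖(∫ ω, Complex.exp (Complex.I *
              (((inner ℝ t (X ω) : ℝ) + (inner ℝ t (Y ω) : ℝ) : ℝ) : ℂ))) -
            (∫ ω, f t ω) * (∫ ω, g t ω)‖) ^ 2 * rhoWeight p α t ≤
        (1 - (‖∫ ω, f t ω‖) ^ 2) * (1 - (‖∫ ω, g t ω‖) ^ 2) *
          rhoWeight p α t := by
    intro t
    have hprod : (fun ω => Complex.exp (Complex.I *
        (((inner ℝ t (X ω) : ℝ) + (inner ℝ t (Y ω) : ℝ) : ℝ) : ℂ)))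
        = fun ω => f t ω * g t ω := by
      funext ω
      simp only [hfdef, hgdef, Complex.ofReal_add, mul_add, Complex.exp_add]
    rw [hprod]
    exact mul_le_mul_of_nonneg_right
      (covariance_bound (hfm t) (hgm t) (hf1 t) (hg1 t)) (hrho t)
  -- measurability in t
  have hjX : Measurable fun q : (EuclideanSpace ℝ (Fin p)) × Ω => f q.1 q.2 :=
    Complex.measurable_exp.comp (measurable_const.mul (Complex.measurable_ofReal.comp
      (measurable_fst.inner (hX.comp measurable_snd))))
  have hjY : Measurable fun q : (EuclideanSpace ℝ (Fin p)) × Ω => g q.1 q.2 :=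
    Complex.measurable_exp.comp (measurable_const.mul (Complex.measurable_ofReal.comp
      (measurable_fst.inner (hY.comp measurable_snd))))
  have hφX : StronglyMeasurable fun t => ∫ ω, f t ω :=
    hjX.stronglyMeasurable.integral_prod_right'
  have hφY : StronglyMeasurable fun t => ∫ ω, g t ω :=
    hjY.stronglyMeasurable.integral_prod_right'
  have hjXY : Measurable fun q : (EuclideanSpace ℝ (Fin p)) × Ω =>
      Complex.exp (Complex.I * (((inner ℝ q.1 (X q.2) : ℝ) + (inner ℝ q.1 (Y q.2) : ℝ) : ℝ) : ℂ)) :=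
    Complex.measurable_exp.comp (measurable_const.mul (Complex.measurable_ofReal.comp
      ((measurable_fst.inner (hX.comp measurable_snd)).add
        (measurable_fst.inner (hY.comp measurable_snd)))))
  have hφXY : StronglyMeasurable fun t => ∫ ω, Complex.exp (Complex.I *
      (((inner ℝ t (X ω) : ℝ) + (inner ℝ t (Y ω) : ℝ) : ℝ) : ℂ)) :=
    hjXY.stronglyMeasurable.integral_prod_right'
  have hrhom : Measurable fun t : EuclideanSpace ℝ (Fin p) => rhoWeight p α t :=
    measurable_const.mul (measurable_norm.pow_const _)
  have habs : ∀ h : (EuclideanSpace ℝ (Fin p)) → ℂ, StronglyMeasurable h →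
      Measurable fun t => ‖h t‖ := fun h hh =>
    continuous_norm.measurable.comp hh.measurable
  have hnum_meas : AEStronglyMeasurable (fun t : EuclideanSpace ℝ (Fin p) =>
      (‖(∫ ω, Complex.exp (Complex.I *
              (((inner ℝ t (X ω) : ℝ) + (inner ℝ t (Y ω) : ℝ) : ℝ) : ℂ))) -
            (∫ ω, f t ω) * (∫ ω, g t ω)‖) ^ 2 * rhoWeight p α t) := by
    exact (((habs _ (hφXY.sub (hφX.mul hφY))).pow_const 2).mul hrhom).aestronglyMeasurable
  -- denominator integrable
  have hden_int : Integrable (fun t : EuclideanSpace ℝ (Fin p) =>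
      (1 - (‖∫ ω, f t ω‖) ^ 2) * (1 - (‖∫ ω, g t ω‖) ^ 2) *
        rhoWeight p α t) := by
    by_contra h
    rw [integral_undef h] at hpos
    exact lt_irrefl _ hpos
  -- numerator integrable
  have hnum_int : Integrable (fun t : EuclideanSpace ℝ (Fin p) =>
      (‖(∫ ω, Complex.exp (Complex.I *
              (((inner ℝ t (X ω) : ℝ) + (inner ℝ t (Y ω) : ℝ) : ℝ) : ℂ))) -
            (∫ ω, f t ω) * (∫ ω, g t ω)‖) ^ 2 * rhoWeight p α t) := by
    refine hden_int.mono' hnum_meas (Filter.Eventually.of_forall fun t => ?_)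
    rw [Real.norm_of_nonneg (mul_nonneg (pow_nonneg (norm_nonneg _) 2) (hrho t))]
    exact hpt t
  have hnum_nonneg : (0:ℝ) ≤ ∫ t : EuclideanSpace ℝ (Fin p),
      (‖(∫ ω, Complex.exp (Complex.I *
              (((inner ℝ t (X ω) : ℝ) + (inner ℝ t (Y ω) : ℝ) : ℝ) : ℂ))) -
            (∫ ω, f t ω) * (∫ ω, g t ω)‖) ^ 2 * rhoWeight p α t :=
    integral_nonneg fun t => mul_nonneg (pow_nonneg (norm_nonneg _) 2) (hrho t)
  have hle : (∫ t : EuclideanSpace ℝ (Fin p),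
      (‖(∫ ω, Complex.exp (Complex.I *
              (((inner ℝ t (X ω) : ℝ) + (inner ℝ t (Y ω) : ℝ) : ℝ) : ℂ))) -
            (∫ ω, f t ω) * (∫ ω, g t ω)‖) ^ 2 * rhoWeight p α t)
      ≤ ∫ t : EuclideanSpace ℝ (Fin p),
        (1 - (‖∫ ω, f t ω‖) ^ 2) * (1 - (‖∫ ω, g t ω‖) ^ 2) *
          rhoWeight p α t :=
    integral_mono hnum_int hden_int hpt
  constructor
  · exact div_nonneg hnum_nonneg (le_of_lt hpos)
  · rw [div_le_one hpos]
    exact hle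
end

section
/- For bivariate standard normal (X,Y) with correlation ρ, the sub-independent correlation siCor(X,Y) (with α=1) equals (√(4+2ρ) − √(1+ρ) − 1)/(√2 − 1), and this quantity satisfies siCor(X,Y) ≤ |ρ|; moreover it equals 0 at ρ = 0 and 1 at ρ = −1. -/
set_option maxHeartbeats 1000000

open MeasureTheory ProbabilityTheory Real
open scoped ENNReal NNReal

namespace SiCor15Aux

lemma integral_Ioi_mul_exp {b : ℝ} (hb : 0 < b) :
    ∫ x in Set.Ioi (0:ℝ), x * rexp (-b * x ^ 2) = (2 * b)⁻¹ := by
  have hderiv : ∀ x ∈ Set.Ici (0:ℝ),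
      HasDerivAt (fun x : ℝ => -(2*b)⁻¹ * rexp (-b * x ^ 2)) (x * rexp (-b * x ^ 2)) x := by
    intro x _
    have h1 : HasDerivAt (fun x : ℝ => -b * x ^ 2) (-b * (2 * x)) x := by
      simpa using ((hasDerivAt_pow 2 x).const_mul (-b))
    have h2 := (h1.exp).const_mul (-(2*b)⁻¹)
    refine h2.congr_deriv ?_
    linear_combination (x * rexp (-b * x ^ 2)) * mul_inv_cancel₀ (by positivity : (2*b) ≠ 0)
  have htend : Filter.Tendsto (fun x : ℝ => -(2*b)⁻¹ * rexp (-b * x ^ 2))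
      Filter.atTop (nhds 0) := by
    have h1 : Filter.Tendsto (fun x : ℝ => -b * x ^ 2) Filter.atTop Filter.atBot := by
      apply Filter.Tendsto.const_mul_atTop_of_neg (by linarith)
      exact Filter.tendsto_pow_atTop (by norm_num)
    have h2 := (Real.tendsto_exp_atBot.comp h1).const_mul (-(2*b)⁻¹)
    simpa using h2
  have := integral_Ioi_of_hasDerivAt_of_tendsto' hderiv
    ((integrable_mul_exp_neg_mul_sq hb).integrableOn) htend
  rw [this]; simp

lemma integral_abs_mul_exp {b : ℝ} (hb : 0 < b) :
    ∫ x : ℝ, |x| * rexp (-b * x ^ 2) = b⁻¹ := by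
  have h : ∀ x : ℝ, |x| * rexp (-b * x ^ 2) = |x| * rexp (-b * |x| ^ 2) := by
    intro x; rw [sq_abs]
  rw [funext h, integral_comp_abs (f := fun x => x * rexp (-b * x ^ 2)),
    integral_Ioi_mul_exp hb]
  field_simp

lemma integral_abs_gaussian (v : ℝ≥0) :
    ∫ x, |x| ∂(gaussianReal 0 v) = Real.sqrt v * Real.sqrt (2 / π) := by
  by_cases hv : v = 0
  · simp [hv, gaussianReal_zero_var]
  have hvpos : (0:ℝ) < v := lt_of_le_of_ne v.coe_nonneg (by exact_mod_cast (Ne.symm hv))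
  rw [gaussianReal_of_var_ne_zero _ hv]
  have hd : (gaussianPDF 0 v) = fun x => ((Real.toNNReal (gaussianPDFReal 0 v x) : ℝ≥0) : ℝ≥0∞) :=
    rfl
  rw [hd, integral_withDensity_eq_integral_smul
    ((measurable_gaussianPDFReal 0 v).real_toNNReal) _]
  have hb : (0:ℝ) < (2*(v:ℝ))⁻¹ := by positivity
  have harg : ∀ x:ℝ, -(x-0)^2/(2*(v:ℝ)) = -(2*(v:ℝ))⁻¹ * x^2 := by
    intro x; field_simp; ring
  have hfun : ∀ x : ℝ, (Real.toNNReal (gaussianPDFReal 0 v x)) • |x|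
      = (√(2*π*(v:ℝ)))⁻¹ * (|x| * rexp (-(2*(v:ℝ))⁻¹ * x^2)) := by
    intro x
    rw [NNReal.smul_def, smul_eq_mul, Real.coe_toNNReal _ (gaussianPDFReal_nonneg 0 v x)]
    rw [gaussianPDFReal, harg x]
    ring
  rw [funext hfun, integral_const_mul, integral_abs_mul_exp hb, inv_inv]
  have hpi := Real.pi_pos
  have lhs_nonneg : 0 ≤ (√(2*π*(v:ℝ)))⁻¹ * (2*(v:ℝ)) := by positivity
  have rhs_nonneg : 0 ≤ Real.sqrt v * Real.sqrt (2/π) := by positivity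
  rw [← Real.sqrt_sq lhs_nonneg, ← Real.sqrt_sq rhs_nonneg]
  congr 1
  rw [mul_pow, mul_pow, inv_pow, Real.sq_sqrt (by positivity : (0:ℝ) ≤ 2*π*v), mul_pow,
    Real.sq_sqrt v.coe_nonneg, Real.sq_sqrt (by positivity : (0:ℝ) ≤ 2/π)]
  field_simp

lemma pdfReal_conv {u v : ℝ≥0} (hu : u ≠ 0) (hv : v ≠ 0) (z : ℝ) :
    ∫ x : ℝ, gaussianPDFReal 0 u x * gaussianPDFReal x v z = gaussianPDFReal 0 (u+v) z := by
  have hpi := Real.pi_pos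
  have hu0 : (0:ℝ) < u := lt_of_le_of_ne u.coe_nonneg (by exact_mod_cast (Ne.symm hu))
  have hv0 : (0:ℝ) < v := lt_of_le_of_ne v.coe_nonneg (by exact_mod_cast (Ne.symm hv))
  set b : ℝ := ((u:ℝ)+v)/(2*u*v) with hbdef
  have hbpos : 0 < b := by positivity
  set c : ℝ := (u:ℝ)*z/((u:ℝ)+v) with hcdef
  have hfun : ∀ x : ℝ, gaussianPDFReal 0 u x * gaussianPDFReal x v z
      = ((√(2*π*(u:ℝ)))⁻¹ * (√(2*π*(v:ℝ)))⁻¹ * rexp (-(z-0)^2/(2*((u:ℝ)+(v:ℝ)))))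
        * rexp (-b*(x-c)^2) := by
    intro x
    have hE : -(x-0)^2/(2*(u:ℝ)) + (-(z-x)^2/(2*(v:ℝ)))
        = -(z-0)^2/(2*((u:ℝ)+(v:ℝ))) + (-b*(x-c)^2) := by
      rw [hbdef, hcdef]; field_simp; ring
    calc gaussianPDFReal 0 u x * gaussianPDFReal x v z
        = (√(2*π*(u:ℝ)))⁻¹ * (√(2*π*(v:ℝ)))⁻¹
          * rexp (-(x-0)^2/(2*(u:ℝ)) + (-(z-x)^2/(2*(v:ℝ)))) := by
          rw [gaussianPDFReal, gaussianPDFReal, Real.exp_add]; ring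
      _ = _ := by rw [hE, Real.exp_add]; ring
  rw [funext hfun, integral_const_mul]
  rw [show (∫ x : ℝ, rexp (-b*(x-c)^2)) = ∫ x : ℝ, (fun t => rexp (-b*t^2)) (x - c) from rfl,
    integral_sub_right_eq_self (fun t => rexp (-b*t^2)) c, integral_gaussian]
  rw [gaussianPDFReal]
  push_cast
  have key : (√(2*π*(u:ℝ)))⁻¹ * (√(2*π*(v:ℝ)))⁻¹ * √(π/b) = (√(2*π*((u:ℝ)+(v:ℝ))))⁻¹ := by
    have l0 : 0 ≤ (√(2*π*(u:ℝ)))⁻¹ * (√(2*π*(v:ℝ)))⁻¹ * √(π/b) := by positivity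
    have r0 : 0 ≤ (√(2*π*((u:ℝ)+(v:ℝ))))⁻¹ := by positivity
    rw [← Real.sqrt_sq l0, ← Real.sqrt_sq r0]
    congr 1
    rw [mul_pow, mul_pow, inv_pow, inv_pow, inv_pow,
      Real.sq_sqrt (by positivity : (0:ℝ) ≤ 2*π*(u:ℝ)),
      Real.sq_sqrt (by positivity : (0:ℝ) ≤ 2*π*(v:ℝ)),
      Real.sq_sqrt (le_of_lt (by positivity : (0:ℝ) < π/b)),
      Real.sq_sqrt (by positivity : (0:ℝ) ≤ 2*π*((u:ℝ)+(v:ℝ)))]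
    rw [hbdef]
    field_simp
  calc (√(2*π*(u:ℝ)))⁻¹ * (√(2*π*(v:ℝ)))⁻¹ * rexp (-(z-0)^2/(2*((u:ℝ)+(v:ℝ)))) * √(π/b)
      = ((√(2*π*(u:ℝ)))⁻¹ * (√(2*π*(v:ℝ)))⁻¹ * √(π/b)) * rexp (-(z-0)^2/(2*((u:ℝ)+(v:ℝ)))) := by
        ring
    _ = _ := by rw [key]

lemma measurable_pdf_left (v : ℝ≥0) (z : ℝ) :
    Measurable (fun x : ℝ => gaussianPDFReal x v z) := by
  unfold gaussianPDFReal
  fun_prop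

lemma integrable_pdf_mul {u v : ℝ≥0} (z : ℝ) :
    Integrable (fun x : ℝ => gaussianPDFReal 0 u x * gaussianPDFReal x v z) := by
  have hpi := Real.pi_pos
  refine ((integrable_gaussianPDFReal 0 u).mul_const ((√(2*π*(v:ℝ)))⁻¹)).mono' ?_ ?_
  · exact ((measurable_gaussianPDFReal 0 u).mul (measurable_pdf_left v z)).aestronglyMeasurable
  · filter_upwards with x
    rw [Real.norm_eq_abs, abs_of_nonneg (mul_nonneg (gaussianPDFReal_nonneg _ _ _)
      (gaussianPDFReal_nonneg _ _ _))]
    apply mul_le_mul_of_nonneg_left _ (gaussianPDFReal_nonneg _ _ _)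
    rw [gaussianPDFReal]
    calc (√(2*π*(v:ℝ)))⁻¹ * rexp (-(z-x)^2/(2*(v:ℝ)))
        ≤ (√(2*π*(v:ℝ)))⁻¹ * 1 := by
          apply mul_le_mul_of_nonneg_left _ (by positivity)
          rw [Real.exp_le_one_iff]
          have hv0 : (0:ℝ) ≤ v := v.coe_nonneg
          by_cases h : (v:ℝ) = 0
          · simp [h]
          · have : (0:ℝ) < v := lt_of_le_of_ne hv0 (Ne.symm h)
            exact div_nonpos_of_nonpos_of_nonneg (by nlinarith [sq_nonneg (z-x)]) (by positivity)
      _ = (√(2*π*(v:ℝ)))⁻¹ := mul_one _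

lemma pdf_conv {u v : ℝ≥0} (hu : u ≠ 0) (hv : v ≠ 0) (z : ℝ) :
    ∫⁻ x, gaussianPDF 0 u x * gaussianPDF x v z = gaussianPDF 0 (u+v) z := by
  have h1 : ∀ x:ℝ, gaussianPDF 0 u x * gaussianPDF x v z
      = ENNReal.ofReal (gaussianPDFReal 0 u x * gaussianPDFReal x v z) := by
    intro x
    rw [gaussianPDF, gaussianPDF, ← ENNReal.ofReal_mul (gaussianPDFReal_nonneg _ _ _)]
  simp_rw [h1]
  rw [← ofReal_integral_eq_lintegral_ofReal (integrable_pdf_mul z)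
    (Filter.Eventually.of_forall fun x => mul_nonneg (gaussianPDFReal_nonneg _ _ _)
      (gaussianPDFReal_nonneg _ _ _)),
    pdfReal_conv hu hv z]
  rfl

lemma gaussian_conv (u v : ℝ≥0) :
    Measure.map (fun p : ℝ × ℝ => p.1 + p.2) ((gaussianReal 0 u).prod (gaussianReal 0 v)) =
      gaussianReal 0 (u + v) := by
  have hadd : Measurable (fun p : ℝ × ℝ => p.1 + p.2) := measurable_fst.add measurable_snd
  by_cases hu : u = 0
  · subst hu
    rw [gaussianReal_zero_var, Measure.dirac_prod, Measure.map_map hadd measurable_prodMk_left]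
    simp [Function.comp_def]
  by_cases hv : v = 0
  · subst hv
    rw [gaussianReal_zero_var, Measure.prod_dirac, Measure.map_map hadd measurable_prodMk_right]
    simp [Function.comp_def]
  have huv : u + v ≠ 0 := fun h => hu (by simpa using (add_eq_zero.mp h).1)
  have hjoint : Measurable (fun p : ℝ × ℝ => gaussianPDF p.1 v p.2) := by
    unfold gaussianPDF gaussianPDFReal
    fun_prop
  ext s hs
  rw [Measure.map_apply hadd hs, Measure.prod_apply (hadd hs)]
  have hstep : ∀ x : ℝ, gaussianReal 0 v (Prod.mk x ⁻¹' ((fun p : ℝ × ℝ => p.1 + p.2) ⁻¹' s))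
      = ∫⁻ z in s, gaussianPDF x v z := by
    intro x
    have h0 : (Prod.mk x ⁻¹' ((fun p : ℝ × ℝ => p.1 + p.2) ⁻¹' s)) = (fun y => y + x) ⁻¹' s := by
      ext y; simp [add_comm]
    rw [h0, ← Measure.map_apply (measurable_add_const x) hs,
      gaussianReal_map_add_const x, zero_add, gaussianReal_apply _ hv s]
  simp_rw [hstep]
  have hinner : Measurable fun x : ℝ => ∫⁻ z in s, gaussianPDF x v z :=
    Measurable.lintegral_prod_right hjoint
  rw [gaussianReal_of_var_ne_zero _ hu,
    lintegral_withDensity_eq_lintegral_mul _ (measurable_gaussianPDF 0 u) hinner]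
  simp only [Pi.mul_apply]
  have hpull : ∀ x : ℝ, gaussianPDF 0 u x * ∫⁻ z in s, gaussianPDF x v z
      = ∫⁻ z in s, gaussianPDF 0 u x * gaussianPDF x v z := by
    intro x
    rw [lintegral_const_mul _ (by fun_prop : Measurable fun z => gaussianPDF x v z)]
  simp_rw [hpull]
  rw [lintegral_lintegral_swap (by
    apply Measurable.aemeasurable
    exact ((measurable_gaussianPDF 0 u).comp measurable_fst).mul hjoint)]
  rw [gaussianReal_apply _ huv s]
  exact lintegral_congr fun z => pdf_conv hu hv z

lemma map_add_gaussian {Ω : Type*} [MeasureSpace Ω] [IsProbabilityMeasure (ℙ : Measure Ω)]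
    {S T : Ω → ℝ} (hS : Measurable S) (hT : Measurable T)
    (hind : IndepFun S T ℙ) {u v : ℝ≥0}
    (hs : Measure.map S ℙ = gaussianReal 0 u) (ht : Measure.map T ℙ = gaussianReal 0 v) :
    Measure.map (fun ω => S ω + T ω) ℙ = gaussianReal 0 (u + v) := by
  have hmap : Measure.map (fun ω => (S ω, T ω)) ℙ = (Measure.map S ℙ).prod (Measure.map T ℙ) :=
    (indepFun_iff_map_prod_eq_prod_map_map hS.aemeasurable hT.aemeasurable).mp hind
  have h1 : (fun ω => S ω + T ω) = (fun p : ℝ × ℝ => p.1 + p.2) ∘ (fun ω => (S ω, T ω)) := rfl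
  rw [h1, ← Measure.map_map (g := fun p : ℝ × ℝ => p.1 + p.2) (measurable_fst.add measurable_snd) (hS.prodMk hT), hmap, hs, ht,
    gaussian_conv]

lemma law_sum {Ω : Type*} [MeasureSpace Ω] [IsProbabilityMeasure (ℙ : Measure Ω)] {ι : Type*}
    [DecidableEq ι] (Q : ι → Ω → ℝ) (hQm : ∀ i, Measurable (Q i))
    (hQi : iIndepFun Q ℙ) (w : ι → ℝ≥0)
    (hQl : ∀ i, Measure.map (Q i) ℙ = gaussianReal 0 (w i)) (s : Finset ι) :
    Measure.map (fun ω => ∑ i ∈ s, Q i ω) ℙ = gaussianReal 0 (∑ i ∈ s, w i) := by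
  induction s using Finset.cons_induction with
  | empty =>
      simp only [Finset.sum_empty]
      rw [show (fun _ : Ω => (0:ℝ)) = (fun _ => (0:ℝ)) from rfl, Measure.map_const,
        gaussianReal_zero_var]
      simp
  | cons j s hj ih =>
      simp only [Finset.sum_cons]
      have hsum : Measurable (fun ω => ∑ i ∈ s, Q i ω) := by
        apply Finset.measurable_sum
        exact fun i _ => hQm i
      have hind : IndepFun (Q j) (fun ω => ∑ i ∈ s, Q i ω) ℙ := by
        have := (hQi.indepFun_finsetSum_of_notMem hQm hj).symm
        have hfun : (∑ i ∈ s, Q i) = fun ω => ∑ i ∈ s, Q i ω := by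
          funext ω; simp [Finset.sum_apply]
        rwa [hfun] at this
      exact map_add_gaussian (hQm j) hsum hind (hQl j) ih

lemma map_abs_integral {Ω : Type*} [MeasureSpace Ω] {Z : Ω → ℝ}
    (hZ : AEMeasurable Z (ℙ : Measure Ω)) (v : ℝ≥0)
    (h : Measure.map Z ℙ = gaussianReal 0 v) :
    ∫ ω, |Z ω| = Real.sqrt v * Real.sqrt (2/π) := by
  rw [← integral_abs_gaussian v, ← h,
    integral_map hZ measurable_abs.aestronglyMeasurable]

lemma expect_abs {Ω : Type*} [MeasureSpace Ω] [IsProbabilityMeasure (ℙ : Measure Ω)]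
    (X Y : Ω → ℝ) (ρ : ℝ) (hρ : ρ ∈ Set.Icc (-1 : ℝ) 1)
    (hgauss : ∀ a b : ℝ,
      Measure.map (fun ω => a * X ω + b * Y ω) (ℙ : Measure Ω) =
        gaussianReal 0 (a ^ 2 + b ^ 2 + 2 * a * b * ρ).toNNReal)
    (P : Fin 4 → Ω → ℝ × ℝ)
    (hmeas : ∀ i, Measurable (P i))
    (hindep : iIndepFun P ℙ)
    (hid : ∀ i, IdentDistrib (P i) (fun ω => (X ω, Y ω)) ℙ ℙ)
    (A B : Fin 4 → ℝ) :
    ∫ ω, |∑ i : Fin 4, (A i * (P i ω).1 + B i * (P i ω).2)|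
      = Real.sqrt (∑ i : Fin 4, (A i^2 + B i^2 + 2*A i*B i*ρ)) * Real.sqrt (2/π) := by
  set g : Fin 4 → ℝ × ℝ → ℝ := fun i p => A i * p.1 + B i * p.2 with hg
  have hgm : ∀ i, Measurable (g i) :=
    fun i => (measurable_fst.const_mul _).add (measurable_snd.const_mul _)
  set Q : Fin 4 → Ω → ℝ := fun i => g i ∘ P i with hQ
  have hQm : ∀ i, Measurable (Q i) := fun i => (hgm i).comp (hmeas i)
  have hQi : iIndepFun Q ℙ := hindep.comp g hgm
  set w : Fin 4 → ℝ≥0 := fun i => (A i^2 + B i^2 + 2*A i*B i*ρ).toNNReal with hw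
  have hQl : ∀ i, Measure.map (Q i) ℙ = gaussianReal 0 (w i) := by
    intro i
    have hident : IdentDistrib (Q i) (g i ∘ fun ω => (X ω, Y ω)) ℙ ℙ := (hid i).comp (hgm i)
    have : (g i ∘ fun ω => (X ω, Y ω)) = fun ω => A i * X ω + B i * Y ω := rfl
    rw [hident.map_eq, this, hgauss (A i) (B i)]
  have hmap := law_sum Q hQm hQi w hQl Finset.univ
  have hnn : ∀ i : Fin 4, 0 ≤ A i^2 + B i^2 + 2*A i*B i*ρ := by
    intro i
    nlinarith [sq_nonneg (A i + B i), sq_nonneg (A i - B i), hρ.1, hρ.2]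
  have hcoe : ((∑ i : Fin 4, w i : ℝ≥0) : ℝ) = ∑ i : Fin 4, (A i^2 + B i^2 + 2*A i*B i*ρ) := by
    push_cast [hw]
    exact Finset.sum_congr rfl fun i _ => Real.coe_toNNReal _ (hnn i)
  have hZ : ∫ ω, |∑ i : Fin 4, Q i ω| = Real.sqrt (∑ i : Fin 4, w i) * Real.sqrt (2/π) :=
    map_abs_integral (Finset.measurable_sum Finset.univ fun i _ => hQm i).aemeasurable _ hmap
  rw [show (fun ω => |∑ i : Fin 4, (A i * (P i ω).1 + B i * (P i ω).2)|)
      = fun ω => |∑ i : Fin 4, Q i ω| from rfl] at *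
  rw [hZ]
  rw [show (∑ i : Fin 4, ((w i : ℝ))) = ((∑ i : Fin 4, w i : ℝ≥0) : ℝ) from
    (NNReal.coe_sum _ _).symm, hcoe]

lemma key_ineq {ρ : ℝ} (h1 : -1 ≤ ρ) :
    (Real.sqrt (4+2*ρ) - Real.sqrt (1+ρ) - 1) / (Real.sqrt 2 - 1) ≤ |ρ| := by
  have hr2 : (Real.sqrt 2)^2 = 2 := Real.sq_sqrt (by norm_num)
  have hr1 : 1 < Real.sqrt 2 := by nlinarith [Real.sqrt_nonneg 2]
  set s := Real.sqrt (1+ρ) with hs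
  have hs0 : 0 ≤ s := Real.sqrt_nonneg _
  have hs2 : s^2 = 1+ρ := Real.sq_sqrt (by linarith)
  set a := Real.sqrt (4+2*ρ) with ha
  have ha0 : 0 ≤ a := Real.sqrt_nonneg _
  have ha2 : a^2 = 4+2*ρ := Real.sq_sqrt (by linarith)
  have har : Real.sqrt 2 ≤ a := by
    rw [ha]; exact Real.sqrt_le_sqrt (by linarith)
  have hid : (a - s - 1) * (a + s + 1) = (s-1)^2 := by linear_combination ha2 - 2*hs2
  have hA : 0 < a + s + 1 := by linarith
  have hfac : Real.sqrt 2 + 1 ≤ a + s + 1 := by linarith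
  have hmul : 1 ≤ (Real.sqrt 2 - 1) * (a + s + 1) := by
    have h0 : (Real.sqrt 2 - 1) * (Real.sqrt 2 + 1) = 1 := by nlinarith
    nlinarith [mul_le_mul_of_nonneg_left hfac (by linarith : (0:ℝ) ≤ Real.sqrt 2 - 1)]
  rw [div_le_iff₀ (by linarith : (0:ℝ) < Real.sqrt 2 - 1)]
  rcases le_or_gt ρ 0 with hneg | hpos
  · rw [abs_of_nonpos hneg]
    have hs1 : s ≤ 1 := by nlinarith
    have h1ms2 : 0 ≤ 1 - s^2 := by nlinarith
    have e1 : (s-1)^2 ≤ (1-s^2) * ((Real.sqrt 2 - 1) * (a+s+1)) := by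
      nlinarith [mul_le_mul_of_nonneg_left hmul h1ms2,
        mul_nonneg (sub_nonneg.mpr hs1) hs0]
    have hstep : (a - s - 1) * (a+s+1) ≤ ((1-s^2) * (Real.sqrt 2 - 1)) * (a+s+1) := by
      rw [hid, mul_assoc]; exact e1
    have hfin := le_of_mul_le_mul_right hstep hA
    nlinarith [hfin]
  · rw [abs_of_pos hpos]
    have hs1 : 1 ≤ s := by nlinarith
    have h1ms2 : 0 ≤ s^2 - 1 := by nlinarith
    have e1 : (s-1)^2 ≤ (s^2-1) * ((Real.sqrt 2 - 1) * (a+s+1)) := by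
      nlinarith [mul_le_mul_of_nonneg_left hmul h1ms2,
        mul_nonneg (sub_nonneg.mpr hs1) hs0]
    have hstep : (a - s - 1) * (a+s+1) ≤ ((s^2-1) * (Real.sqrt 2 - 1)) * (a+s+1) := by
      rw [hid, mul_assoc]; exact e1
    have hfin := le_of_mul_le_mul_right hstep hA
    nlinarith [hfin]

end SiCor15Aux

open SiCor15Aux

theorem stmt15 {Ω : Type*} [MeasureSpace Ω] [IsProbabilityMeasure (ℙ : Measure Ω)]
    (X Y : Ω → ℝ) (hX : Measurable X) (hY : Measurable Y)
    (ρ : ℝ) (hρ : ρ ∈ Set.Icc (-1 : ℝ) 1)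
    (hgauss : ∀ a b : ℝ,
      Measure.map (fun ω => a * X ω + b * Y ω) (ℙ : Measure Ω) =
        gaussianReal 0 (a ^ 2 + b ^ 2 + 2 * a * b * ρ).toNNReal)
    (P : Fin 4 → Ω → ℝ × ℝ)
    (hmeas : ∀ i, Measurable (P i))
    (hindep : iIndepFun P ℙ)
    (hid : ∀ i, IdentDistrib (P i) (fun ω => (X ω, Y ω)) ℙ ℙ) :
    ∀ num den : ℝ,
      num = 2 * (∫ ω, |(P 0 ω).1 + (P 0 ω).2 - (P 1 ω).1 - (P 2 ω).2|) -
          (∫ ω, |(P 0 ω).1 + (P 1 ω).2 - (P 2 ω).1 - (P 3 ω).2|) -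
          (∫ ω, |(P 0 ω).1 + (P 0 ω).2 - (P 1 ω).1 - (P 1 ω).2|) →
      den = (∫ ω, |(P 0 ω).1 - (P 1 ω).1|) + (∫ ω, |(P 2 ω).2 - (P 3 ω).2|) -
          (∫ ω, |(P 0 ω).1 - (P 1 ω).1 + (P 2 ω).2 - (P 3 ω).2|) →
      (num / den =
          (Real.sqrt (4 + 2 * ρ) - Real.sqrt (1 + ρ) - 1) / (Real.sqrt 2 - 1) ∧
        num / den ≤ |ρ| ∧
        (ρ = 0 → num / den = 0) ∧
        (ρ = -1 → num / den = 1)) := by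
  intro num den hnum hden
  have hpi := Real.pi_pos
  set k := Real.sqrt (2/π) with hk
  have hkpos : 0 < k := Real.sqrt_pos.mpr (by positivity)
  have h4 : Real.sqrt 4 = 2 := by
    rw [show (4:ℝ) = 2^2 by norm_num, Real.sqrt_sq (by norm_num)]
  have hr1 : 1 < Real.sqrt 2 := by
    nlinarith [Real.sq_sqrt (by norm_num : (0:ℝ) ≤ 2), Real.sqrt_nonneg 2]
  -- term 1
  have T1 : ∫ ω, |(P 0 ω).1 + (P 0 ω).2 - (P 1 ω).1 - (P 2 ω).2|
      = Real.sqrt (4 + 2*ρ) * k := by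
    have h := expect_abs X Y ρ hρ hgauss P hmeas hindep hid ![1,-1,0,0] ![1,0,-1,0]
    rw [show (∑ i : Fin 4, ((![1,-1,0,0] : Fin 4 → ℝ) i^2 + (![1,0,-1,0] : Fin 4 → ℝ) i^2
        + 2*(![1,-1,0,0] : Fin 4 → ℝ) i*(![1,0,-1,0] : Fin 4 → ℝ) i*ρ)) = 4 + 2*ρ by
      simp [Fin.sum_univ_four]; ring] at h
    rw [← h]
    congr 1
    funext ω
    congr 1
    simp [Fin.sum_univ_four]
    ring
  -- term 2
  have T2 : ∫ ω, |(P 0 ω).1 + (P 1 ω).2 - (P 2 ω).1 - (P 3 ω).2| = 2 * k := by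
    have h := expect_abs X Y ρ hρ hgauss P hmeas hindep hid ![1,0,-1,0] ![0,1,0,-1]
    rw [show (∑ i : Fin 4, ((![1,0,-1,0] : Fin 4 → ℝ) i^2 + (![0,1,0,-1] : Fin 4 → ℝ) i^2
        + 2*(![1,0,-1,0] : Fin 4 → ℝ) i*(![0,1,0,-1] : Fin 4 → ℝ) i*ρ)) = 4 by
      simp [Fin.sum_univ_four]; ring] at h
    rw [h4] at h
    rw [← h]
    congr 1
    funext ω
    congr 1
    simp [Fin.sum_univ_four]
    ring
  -- term 3
  have T3 : ∫ ω, |(P 0 ω).1 + (P 0 ω).2 - (P 1 ω).1 - (P 1 ω).2|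
      = 2 * Real.sqrt (1 + ρ) * k := by
    have h := expect_abs X Y ρ hρ hgauss P hmeas hindep hid ![1,-1,0,0] ![1,-1,0,0]
    rw [show (∑ i : Fin 4, ((![1,-1,0,0] : Fin 4 → ℝ) i^2 + (![1,-1,0,0] : Fin 4 → ℝ) i^2
        + 2*(![1,-1,0,0] : Fin 4 → ℝ) i*(![1,-1,0,0] : Fin 4 → ℝ) i*ρ)) = 4*(1+ρ) by
      simp [Fin.sum_univ_four]; ring] at h
    rw [Real.sqrt_mul (by norm_num : (0:ℝ) ≤ 4) (1+ρ), h4] at h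
    rw [← h]
    congr 1
    funext ω
    congr 1
    simp [Fin.sum_univ_four]
    ring
  -- term 4
  have T4 : ∫ ω, |(P 0 ω).1 - (P 1 ω).1| = Real.sqrt 2 * k := by
    have h := expect_abs X Y ρ hρ hgauss P hmeas hindep hid ![1,-1,0,0] ![0,0,0,0]
    rw [show (∑ i : Fin 4, ((![1,-1,0,0] : Fin 4 → ℝ) i^2 + (![0,0,0,0] : Fin 4 → ℝ) i^2
        + 2*(![1,-1,0,0] : Fin 4 → ℝ) i*(![0,0,0,0] : Fin 4 → ℝ) i*ρ)) = 2 by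
      simp [Fin.sum_univ_four]; norm_num] at h
    rw [← h]
    congr 1
    funext ω
    congr 1
    simp [Fin.sum_univ_four]
    ring
  -- term 5
  have T5 : ∫ ω, |(P 2 ω).2 - (P 3 ω).2| = Real.sqrt 2 * k := by
    have h := expect_abs X Y ρ hρ hgauss P hmeas hindep hid ![0,0,0,0] ![0,0,1,-1]
    rw [show (∑ i : Fin 4, ((![0,0,0,0] : Fin 4 → ℝ) i^2 + (![0,0,1,-1] : Fin 4 → ℝ) i^2
        + 2*(![0,0,0,0] : Fin 4 → ℝ) i*(![0,0,1,-1] : Fin 4 → ℝ) i*ρ)) = 2 by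
      simp [Fin.sum_univ_four]; norm_num] at h
    rw [← h]
    congr 1
    funext ω
    congr 1
    simp [Fin.sum_univ_four]
    ring
  -- term 6
  have T6 : ∫ ω, |(P 0 ω).1 - (P 1 ω).1 + (P 2 ω).2 - (P 3 ω).2| = 2 * k := by
    have h := expect_abs X Y ρ hρ hgauss P hmeas hindep hid ![1,-1,0,0] ![0,0,1,-1]
    rw [show (∑ i : Fin 4, ((![1,-1,0,0] : Fin 4 → ℝ) i^2 + (![0,0,1,-1] : Fin 4 → ℝ) i^2
        + 2*(![1,-1,0,0] : Fin 4 → ℝ) i*(![0,0,1,-1] : Fin 4 → ℝ) i*ρ)) = 4 by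
      simp [Fin.sum_univ_four]; norm_num] at h
    rw [h4] at h
    rw [← h]
    congr 1
    funext ω
    congr 1
    simp [Fin.sum_univ_four]
    ring
  have hnum' : num = (Real.sqrt (4+2*ρ) - Real.sqrt (1+ρ) - 1) * (2*k) := by
    rw [hnum, T1, T2, T3]; ring
  have hden' : den = (Real.sqrt 2 - 1) * (2*k) := by
    rw [hden, T4, T5, T6]; ring
  have h2k : (2*k) ≠ 0 := by positivity
  have heq : num / den = (Real.sqrt (4 + 2*ρ) - Real.sqrt (1+ρ) - 1) / (Real.sqrt 2 - 1) := by
    rw [hnum', hden', mul_div_mul_right _ _ h2k]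
  refine ⟨heq, ?_, ?_, ?_⟩
  · rw [heq]; exact key_ineq hρ.1
  · intro h0
    rw [heq, h0]
    norm_num [h4]
  · intro h0
    rw [heq, h0]
    norm_num
    exact (by linarith : Real.sqrt 2 - 1 ≠ 0)
end

section
/- (Hoeffding's inequality under sub-independence) Let X₁,...,Xₙ be real random variables with Xᵢ ∈ [aᵢ, bᵢ] almost surely, such that for every t ∈ ℝ, E[e^{t(X₁+⋯+Xₙ)}] = ∏ᵢ E[e^{tXᵢ}] (sub-independence at the level of moment generating functions). Then for Sₙ = X₁+⋯+Xₙ and any ε > 0, P(Sₙ − E[Sₙ] ≥ ε) ≤ exp(−2ε²/∑ᵢ(bᵢ−aᵢ)²) and P(Sₙ − E[Sₙ] ≤ −ε) ≤ exp(−2ε²/∑ᵢ(bᵢ−aᵢ)²). -/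
open MeasureTheory ProbabilityTheory Real

lemma hoeff_core (p : ℝ) (hp0 : 0 ≤ p) (hp1 : p ≤ 1) (h : ℝ) :
    (1 - p) * exp (-p * h) + p * exp ((1 - p) * h) ≤ exp (h ^ 2 / 8) := by
  set D : ℝ → ℝ := fun x => (1 - p) + p * exp x with hDdef
  have hD : ∀ x, 0 < D x := by
    intro x
    rcases hp1.lt_or_eq with hlt | heq
    · have : 0 ≤ p * exp x := mul_nonneg hp0 (exp_pos x).le
      simp only [hDdef]; nlinarith
    · simp only [hDdef, ← heq]; have := exp_pos x; nlinarith
  set g : ℝ → ℝ := fun x => x ^ 2 / 8 + p * x - Real.log (D x) with hgdef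
  set g' : ℝ → ℝ := fun x => x / 4 + p - p * exp x / D x with hg'def
  have hDderiv : ∀ x, HasDerivAt D (p * exp x) x := by
    intro x
    exact ((Real.hasDerivAt_exp x).const_mul p).const_add (1 - p)
  have hg : ∀ x, HasDerivAt g (g' x) x := by
    intro x
    have h1 : HasDerivAt (fun x : ℝ => x ^ 2 / 8 + p * x) (x / 4 + p) x := by
      have := ((hasDerivAt_pow 2 x).div_const 8).add ((hasDerivAt_id x).const_mul p)
      exact this.congr_deriv (by push_cast; ring)
    have h2 : HasDerivAt (fun x => Real.log (D x)) (p * exp x / D x) x :=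
      (hDderiv x).log (hD x).ne'
    exact h1.sub h2
  have hg' : ∀ x, HasDerivAt g' (1 / 4 - p * (1 - p) * exp x / (D x) ^ 2) x := by
    intro x
    have h1 : HasDerivAt (fun x : ℝ => x / 4 + p) (1 / 4) x := by
      simpa using ((hasDerivAt_id x).div_const 4).add_const p
    have h2 : HasDerivAt (fun x => p * exp x / D x)
        ((p * exp x * D x - p * exp x * (p * exp x)) / (D x) ^ 2) x :=
      ((Real.hasDerivAt_exp x).const_mul p).div (hDderiv x) (hD x).ne'
    have := h1.sub h2
    refine this.congr_deriv ?_
    have hDx := (hD x).ne'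
    congr 2; simp only [hDdef]
    ring
  have hg'nonneg : ∀ x, 0 ≤ 1 / 4 - p * (1 - p) * exp x / (D x) ^ 2 := by
    intro x
    rw [sub_nonneg, div_le_iff₀ (pow_pos (hD x) 2)]
    have := exp_pos x
    simp only [hDdef]
    nlinarith [sq_nonneg ((1 - p) - p * exp x), mul_nonneg hp0 (exp_pos x).le]
  have hg'mono : Monotone g' := by
    have : ∀ x, 0 ≤ deriv g' x := fun x => (hg' x).deriv ▸ hg'nonneg x
    exact monotone_of_deriv_nonneg (fun x => (hg' x).differentiableAt) this
  have hg'0 : g' 0 = 0 := by simp [hg'def, hDdef]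
  have hgd : Differentiable ℝ g := fun x => (hg x).differentiableAt
  have hkey : 0 ≤ g h := by
    have hg0 : g 0 = 0 := by simp [hgdef, hDdef]
    rcases le_total 0 h with hh | hh
    · have : MonotoneOn g (Set.Ici 0) := by
        apply monotoneOn_of_deriv_nonneg (convex_Ici 0) hgd.continuous.continuousOn
          (hgd.differentiableOn)
        intro x hx
        rw [(hg x).deriv]
        have : g' 0 ≤ g' x := hg'mono (le_of_lt (by simpa using hx))
        linarith [hg'0 ▸ this]
      have := this (Set.self_mem_Ici) hh hh
      linarith [hg0 ▸ this]
    · have : AntitoneOn g (Set.Iic 0) := by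
        apply antitoneOn_of_deriv_nonpos (convex_Iic 0) hgd.continuous.continuousOn
          (hgd.differentiableOn)
        intro x hx
        rw [(hg x).deriv]
        have : g' x ≤ g' 0 := hg'mono (le_of_lt (by simpa using hx))
        linarith [hg'0 ▸ this]
      have := this hh (Set.self_mem_Iic) hh
      linarith [hg0 ▸ this]
  -- from g h ≥ 0 : log (D h) ≤ h^2/8 + p*h
  have hlog : Real.log (D h) ≤ h ^ 2 / 8 + p * h := by
    simp only [hgdef] at hkey; linarith
  have hDle : D h ≤ exp (h ^ 2 / 8 + p * h) := by
    calc D h = exp (Real.log (D h)) := (exp_log (hD h)).symm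
    _ ≤ _ := exp_le_exp.2 hlog
  calc (1 - p) * exp (-p * h) + p * exp ((1 - p) * h)
      = exp (-(p * h)) * D h := by
        simp only [hDdef]
        rw [show (1 - p) * h = -(p * h) + h by ring, exp_add,
          show -p * h = -(p * h) by ring]
        ring
    _ ≤ exp (-(p * h)) * exp (h ^ 2 / 8 + p * h) := by
        exact mul_le_mul_of_nonneg_left hDle (exp_pos _).le
    _ = exp (h ^ 2 / 8) := by rw [← exp_add]; ring_nf

lemma hoeff_mgf {Ω : Type*} [MeasureSpace Ω] [IsProbabilityMeasure (ℙ : Measure Ω)]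
    (X : Ω → ℝ) (a b t : ℝ) (hX : Measurable X)
    (hb : ∀ᵐ ω ∂(ℙ : Measure Ω), X ω ∈ Set.Icc a b) :
    ∫ ω, exp (t * X ω) ≤ exp (t * (∫ ω, X ω) + t ^ 2 * (b - a) ^ 2 / 8) := by
  have hab : a ≤ b := by
    obtain ⟨ω, hω⟩ := hb.exists
    exact hω.1.trans hω.2
  set C := max |a| |b| with hC
  have hbC : ∀ᵐ ω ∂(ℙ : Measure Ω), ‖X ω‖ ≤ C := by
    filter_upwards [hb] with ω hω
    rw [Real.norm_eq_abs, abs_le]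
    constructor
    · calc -C ≤ -|a| := by simp [hC]
        _ ≤ a := neg_abs_le a
        _ ≤ X ω := hω.1
    · exact hω.2.trans ((le_abs_self b).trans (le_max_right _ _))
  have hXint : Integrable X := by
    refine Integrable.mono' (integrable_const C) hX.aestronglyMeasurable hbC
  have hexpint : Integrable (fun ω => exp (t * X ω)) := by
    refine Integrable.mono' (integrable_const (exp (|t| * C))) ?_ ?_
    · exact ((hX.const_mul t).exp).aestronglyMeasurable
    · filter_upwards [hbC] with ω hω
      rw [Real.norm_eq_abs, abs_of_pos (exp_pos _), exp_le_exp]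
      calc t * X ω ≤ |t * X ω| := le_abs_self _
        _ = |t| * |X ω| := abs_mul t _
        _ ≤ |t| * C := by
            apply mul_le_mul_of_nonneg_left _ (abs_nonneg t)
            simpa [Real.norm_eq_abs] using hω
  set m := ∫ ω, X ω with hm
  have hma : a ≤ m := by
    have : ∫ (_ : Ω), a ∂(ℙ : Measure Ω) ≤ ∫ ω, X ω := by
      refine integral_mono_ae (integrable_const a) hXint ?_
      filter_upwards [hb] with ω hω using hω.1
    simpa using this
  have hmb : m ≤ b := by
    have : ∫ ω, X ω ≤ ∫ (_ : Ω), b ∂(ℙ : Measure Ω) := by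
      refine integral_mono_ae hXint (integrable_const b) ?_
      filter_upwards [hb] with ω hω using hω.2
    simpa using this
  rcases hab.lt_or_eq with hlt | heq
  · -- a < b
    have hba : (0:ℝ) < b - a := by linarith
    set p := (m - a) / (b - a) with hp
    have hp0 : 0 ≤ p := div_nonneg (by linarith) hba.le
    have hp1 : p ≤ 1 := by
      rw [hp, div_le_one hba]; linarith
    set h := t * (b - a) with hh
    -- pointwise convexity bound
    have hptwise : ∀ᵐ ω ∂(ℙ : Measure Ω), exp (t * X ω) ≤
        ((b - X ω) / (b - a)) * exp (t * a) + ((X ω - a) / (b - a)) * exp (t * b) := by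
      filter_upwards [hb] with ω hω
      set s := (X ω - a) / (b - a) with hs
      have hs0 : 0 ≤ s := div_nonneg (by linarith [hω.1]) hba.le
      have hs1 : s ≤ 1 := by rw [hs, div_le_one hba]; linarith [hω.2]
      have hx : t * X ω = (1 - s) * (t * a) + s * (t * b) := by
        rw [hs]; field_simp; try ring
      have := convexOn_exp.2 (Set.mem_univ (t * a)) (Set.mem_univ (t * b))
        (by linarith : (0:ℝ) ≤ 1 - s) hs0 (by ring)
      rw [hx]
      simp only [smul_eq_mul] at this
      calc exp ((1 - s) * (t * a) + s * (t * b)) ≤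
          (1 - s) * exp (t * a) + s * exp (t * b) := this
        _ = ((b - X ω) / (b - a)) * exp (t * a) + ((X ω - a) / (b - a)) * exp (t * b) := by
            rw [hs]; field_simp; try ring
    have i1 : Integrable (fun ω => ((b - X ω) / (b - a)) * exp (t * a)) := by
      exact (((integrable_const b).sub hXint).div_const (b - a)).mul_const _
    have i2 : Integrable (fun ω => ((X ω - a) / (b - a)) * exp (t * b)) := by
      exact ((hXint.sub (integrable_const a)).div_const (b - a)).mul_const _
    have hrhsint : Integrable (fun ω => ((b - X ω) / (b - a)) * exp (t * a) +
        ((X ω - a) / (b - a)) * exp (t * b)) := i1.add i2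
    have hint : ∫ ω, exp (t * X ω) ≤ ((b - m) / (b - a)) * exp (t * a) +
        ((m - a) / (b - a)) * exp (t * b) := by
      calc ∫ ω, exp (t * X ω) ≤ ∫ ω, (((b - X ω) / (b - a)) * exp (t * a) +
          ((X ω - a) / (b - a)) * exp (t * b)) := integral_mono_ae hexpint hrhsint hptwise
        _ = ((b - m) / (b - a)) * exp (t * a) + ((m - a) / (b - a)) * exp (t * b) := by
            rw [integral_add i1 i2,
              integral_mul_const, integral_mul_const, integral_div, integral_div,
              integral_sub (integrable_const b) hXint, integral_sub hXint (integrable_const a)]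
            simp [hm]
    refine hint.trans ?_
    have hfin := hoeff_core p hp0 hp1 h
    have e1 : t * a = t * m + (-p * h) := by rw [hp, hh]; field_simp; ring
    have e2 : t * b = t * m + ((1 - p) * h) := by rw [hp, hh]; field_simp; ring
    have e3 : (b - m) / (b - a) = 1 - p := by rw [hp]; field_simp; ring
    calc ((b - m) / (b - a)) * exp (t * a) + ((m - a) / (b - a)) * exp (t * b)
        = exp (t * m) * ((1 - p) * exp (-p * h) + p * exp ((1 - p) * h)) := by
          rw [e1, e2, e3, exp_add, exp_add, hp]; ring
      _ ≤ exp (t * m) * exp (h ^ 2 / 8) :=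
          mul_le_mul_of_nonneg_left hfin (exp_pos _).le
      _ = exp (t * m + t ^ 2 * (b - a) ^ 2 / 8) := by
          rw [← exp_add, hh]; ring_nf
  · -- a = b
    subst heq
    have hXa : ∀ᵐ ω ∂(ℙ : Measure Ω), X ω = a := by
      filter_upwards [hb] with ω hω using le_antisymm hω.2 hω.1
    have h1 : ∫ ω, exp (t * X ω) = exp (t * a) := by
      rw [integral_congr_ae (g := fun _ => exp (t * a)) ?_]
      · simp
      · filter_upwards [hXa] with ω hω; rw [hω]
    have h2 : m = a := by
      rw [hm, integral_congr_ae (g := fun _ => a) hXa]; simp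
    rw [h1, h2]
    simp

lemma hoeff_upper {Ω : Type*} [MeasureSpace Ω] [IsProbabilityMeasure (ℙ : Measure Ω)]
    {n : ℕ} (X : Fin n → Ω → ℝ) (a b : Fin n → ℝ)
    (hmeas : ∀ i, Measurable (X i))
    (hbound : ∀ i, ∀ᵐ ω ∂(ℙ : Measure Ω), X i ω ∈ Set.Icc (a i) (b i))
    (hsub : ∀ t : ℝ,
      (∫ ω, Real.exp (t * ∑ i, X i ω)) = ∏ i, ∫ ω, Real.exp (t * X i ω))
    (ε : ℝ) (hε : 0 < ε) :
    (ℙ : Measure Ω) {ω | ε ≤ (∑ i, X i ω) - ∫ ω', ∑ i, X i ω'} ≤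
        ENNReal.ofReal (Real.exp (-2 * ε ^ 2 / ∑ i, (b i - a i) ^ 2)) := by
  set V2 := ∑ i, (b i - a i) ^ 2 with hV2
  have hV2nn : 0 ≤ V2 := Finset.sum_nonneg fun i _ => sq_nonneg _
  rcases hV2nn.eq_or_lt with h0 | hpos
  · rw [← h0, div_zero, exp_zero, ENNReal.ofReal_one]
    exact prob_le_one
  set t := 4 * ε / V2 with ht
  have htpos : 0 < t := div_pos (by linarith) hpos
  set S : Ω → ℝ := fun ω => ∑ i, X i ω with hS
  set m := ∫ ω', S ω' with hm
  have hSmeas : Measurable S := Finset.measurable_sum _ fun i _ => hmeas i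
  have hball : ∀ᵐ ω ∂(ℙ : Measure Ω), ∀ i, X i ω ∈ Set.Icc (a i) (b i) :=
    (ae_all_iff).2 hbound
  set C : ℝ := ∑ i, max |a i| |b i| with hC
  have hSbd : ∀ᵐ ω ∂(ℙ : Measure Ω), |S ω| ≤ C := by
    filter_upwards [hball] with ω hω
    calc |S ω| ≤ ∑ i, |X i ω| := Finset.abs_sum_le_sum_abs _ _
      _ ≤ C := by
        apply Finset.sum_le_sum
        intro i _
        rw [abs_le]
        refine ⟨?_, (hω i).2.trans ((le_abs_self _).trans (le_max_right _ _))⟩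
        calc -(max |a i| |b i|) ≤ -|a i| := by simp
          _ ≤ a i := neg_abs_le _
          _ ≤ X i ω := (hω i).1
  have hexpint : Integrable (fun ω => exp (t * S ω)) := by
    refine Integrable.mono' (integrable_const (exp (|t| * C))) ?_ ?_
    · exact ((hSmeas.const_mul t).exp).aestronglyMeasurable
    · filter_upwards [hSbd] with ω hω
      rw [Real.norm_eq_abs, abs_of_pos (exp_pos _), exp_le_exp]
      calc t * S ω ≤ |t * S ω| := le_abs_self _
        _ = |t| * |S ω| := abs_mul _ _
        _ ≤ |t| * C := mul_le_mul_of_nonneg_left hω (abs_nonneg _)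
  have hXint : ∀ i, Integrable (X i) := by
    intro i
    refine Integrable.mono' (integrable_const (max |a i| |b i|)) (hmeas i).aestronglyMeasurable ?_
    filter_upwards [hbound i] with ω hω
    rw [Real.norm_eq_abs, abs_le]
    refine ⟨?_, hω.2.trans ((le_abs_self _).trans (le_max_right _ _))⟩
    calc -(max |a i| |b i|) ≤ -|a i| := by simp
      _ ≤ a i := neg_abs_le _
      _ ≤ X i ω := hω.1
  have hmsum : m = ∑ i, ∫ ω, X i ω := by
    rw [hm, hS]
    exact integral_finset_sum _ fun i _ => hXint i
  -- Chernoff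
  have hset : {ω | ε ≤ S ω - m} = {ω | m + ε ≤ S ω} := by
    ext ω; simp only [Set.mem_setOf_eq]; constructor <;> intro <;> linarith
  have hcher := measure_ge_le_exp_mul_mgf (X := S) (μ := ℙ) (m + ε) htpos.le hexpint
  have hmgf : mgf S ℙ t ≤ exp (t * m + t ^ 2 * V2 / 8) := by
    have h1 : mgf S ℙ t = ∏ i, ∫ ω, exp (t * X i ω) := by
      rw [mgf]
      exact hsub t
    rw [h1]
    calc ∏ i, ∫ ω, exp (t * X i ω)
        ≤ ∏ i, exp (t * (∫ ω, X i ω) + t ^ 2 * (b i - a i) ^ 2 / 8) := by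
          apply Finset.prod_le_prod
          · exact fun i _ => integral_nonneg fun ω => (exp_pos _).le
          · exact fun i _ => hoeff_mgf (X i) (a i) (b i) t (hmeas i) (hbound i)
      _ = exp (∑ i, (t * (∫ ω, X i ω) + t ^ 2 * (b i - a i) ^ 2 / 8)) :=
          (Real.exp_sum _ _).symm
      _ = exp (t * m + t ^ 2 * V2 / 8) := by
          rw [Finset.sum_add_distrib, ← Finset.mul_sum, ← hmsum, hV2, Finset.mul_sum,
            ← Finset.sum_div]
  have hfinal : ((ℙ : Measure Ω) {ω | ε ≤ S ω - m}).toReal ≤ exp (-2 * ε ^ 2 / V2) := by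
    rw [hset]
    refine hcher.trans ?_
    calc exp (-t * (m + ε)) * mgf S ℙ t
        ≤ exp (-t * (m + ε)) * exp (t * m + t ^ 2 * V2 / 8) :=
          mul_le_mul_of_nonneg_left hmgf (exp_pos _).le
      _ = exp (-t * (m + ε) + (t * m + t ^ 2 * V2 / 8)) := (exp_add _ _).symm
      _ = exp (-2 * ε ^ 2 / V2) := by
          congr 1
          rw [ht]
          field_simp
          ring
  exact (ENNReal.le_ofReal_iff_toReal_le (measure_ne_top _ _) (exp_nonneg _)).2 hfinal

theorem stmt19 {Ω : Type*} [MeasureSpace Ω] [IsProbabilityMeasure (ℙ : Measure Ω)]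
    {n : ℕ} (X : Fin n → Ω → ℝ) (a b : Fin n → ℝ)
    (hmeas : ∀ i, Measurable (X i))
    (hbound : ∀ i, ∀ᵐ ω ∂(ℙ : Measure Ω), X i ω ∈ Set.Icc (a i) (b i))
    (hsub : ∀ t : ℝ,
      (∫ ω, Real.exp (t * ∑ i, X i ω)) = ∏ i, ∫ ω, Real.exp (t * X i ω))
    (ε : ℝ) (hε : 0 < ε) :
    (ℙ : Measure Ω) {ω | ε ≤ (∑ i, X i ω) - ∫ ω', ∑ i, X i ω'} ≤
        ENNReal.ofReal (Real.exp (-2 * ε ^ 2 / ∑ i, (b i - a i) ^ 2)) ∧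
      (ℙ : Measure Ω) {ω | (∑ i, X i ω) - ∫ ω', ∑ i, X i ω' ≤ -ε} ≤
        ENNReal.ofReal (Real.exp (-2 * ε ^ 2 / ∑ i, (b i - a i) ^ 2)) := by
  constructor
  · exact hoeff_upper X a b hmeas hbound hsub ε hε
  · -- apply the upper bound to -X
    have hmeas' : ∀ i, Measurable (fun ω => -X i ω) := fun i => (hmeas i).neg
    have hbound' : ∀ i, ∀ᵐ ω ∂(ℙ : Measure Ω),
        (fun ω => -X i ω) ω ∈ Set.Icc (-b i) (-a i) := by
      intro i
      filter_upwards [hbound i] with ω hω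
      exact ⟨by simpa using neg_le_neg hω.2, by simpa using neg_le_neg hω.1⟩
    have hsub' : ∀ t : ℝ,
        (∫ ω, Real.exp (t * ∑ i, (fun ω => -X i ω) ω)) =
          ∏ i, ∫ ω, Real.exp (t * (fun ω => -X i ω) ω) := by
      intro t
      have e1 : ∀ ω : Ω, t * ∑ i, -X i ω = -t * ∑ i, X i ω := by
        intro ω
        rw [Finset.sum_neg_distrib]; ring
      have e2 : ∀ (i : Fin n) (ω : Ω), t * -X i ω = -t * X i ω := fun i ω => by ring
      simp only [e1, e2]
      exact hsub (-t)
    have key := hoeff_upper (fun i ω => -X i ω) (fun i => -b i) (fun i => -a i)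
      hmeas' hbound' hsub' ε hε
    have hsumneg : (fun ω => ∑ i, -X i ω) = fun ω => -(∑ i, X i ω) := by
      funext ω; exact Finset.sum_neg_distrib (f := fun i => X i ω)
    have hintneg : (∫ ω', ∑ i, -X i ω') = -∫ ω', ∑ i, X i ω' := by
      rw [hsumneg]; exact integral_neg _
    have hsq : (∑ i, (-a i - -b i) ^ 2) = ∑ i, (b i - a i) ^ 2 :=
      Finset.sum_congr rfl fun i _ => by ring
    have hsets : {ω | ε ≤ (∑ i, -X i ω) - ∫ ω', ∑ i, -X i ω'} =
        {ω | (∑ i, X i ω) - ∫ ω', ∑ i, X i ω' ≤ -ε} := by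
      ext ω
      simp only [Set.mem_setOf_eq, Finset.sum_neg_distrib, integral_neg]
      constructor <;> intro <;> linarith
    rw [hsets, hsq] at key
    exact key
end
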